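/- arXiv:math/0203193 — 2 statements merged into one kernel-verified Lean document; each statement's English description precedes it below -/
import Mathlib

section
/- Let M be a von Neumann algebra acting on a complex Hilbert space H, let P : M → M be a normal, unital, completely positive linear map, and let (π, K, W) be a minimal Stinespring triple for P. Then for each S ∈ M' there is a unique operator φ(S) ∈ B(K) commuting with π(M) such that φ(S)W = WS; moreover ‖φ(S)‖ ≤ ‖S‖, and the map S ↦ φ(S) is a unital *-homomorphism of M' into the commutant of π(M) that is normal (weak-operator continuous on bounded sets). -/
open scoped ComplexOrder
open ContinuousLinearMap

noncomputable section

/-- Positivity of an `n × n` operator matrix `(a i j)`, regarded as an operator on the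
`n`-fold direct sum `Hⁿ`: `∑ᵢⱼ ⟨kᵢ, a i j kⱼ⟩ ≥ 0` for all `k₁, …, kₙ ∈ H`. -/
def PosOpMatrix {H : Type*} [NormedAddCommGroup H] [InnerProductSpace ℂ H] {n : ℕ}
    (a : Fin n → Fin n → (H →L[ℂ] H)) : Prop :=
  ∀ k : Fin n → H, 0 ≤ ∑ i, ∑ j, (inner ℂ (k i) (a i j (k j)) : ℂ)

/-- Complete positivity of a map relative to a von Neumann algebra `M`: positive operator
matrices with entries in `M` are sent to positive operator matrices. -/
def IsCPOn {H : Type*} [NormedAddCommGroup H] [InnerProductSpace ℂ H] [CompleteSpace H]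
    (M : VonNeumannAlgebra H) (P : (H →L[ℂ] H) → (H →L[ℂ] H)) : Prop :=
  ∀ (n : ℕ) (a : Fin n → Fin n → (H →L[ℂ] H)),
    (∀ i j, a i j ∈ M) → PosOpMatrix a → PosOpMatrix fun i j => P (a i j)

/-- Weak-operator continuity of a map on bounded subsets of `s`; for bounded linear maps on
von Neumann algebras this captures normality (σ-weak continuity). -/
def WOTContinuousOnBalls {H K : Type*} [NormedAddCommGroup H] [InnerProductSpace ℂ H]
    [NormedAddCommGroup K] [InnerProductSpace ℂ K]
    (s : Set (H →L[ℂ] H)) (f : (H →L[ℂ] H) → (K →L[ℂ] K)) : Prop :=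
  ∀ r : ℝ, ContinuousOn
    (fun T : H →WOT[ℂ] H =>
      (ContinuousLinearMapWOT.linearEquiv (σ := RingHom.id ℂ) (E := K) (F := K) ℂ).symm (f (((ContinuousLinearMapWOT.linearEquiv (σ := RingHom.id ℂ) (E := H) (F := H) ℂ).symm).symm T)))
    ((ContinuousLinearMapWOT.linearEquiv (σ := RingHom.id ℂ) (E := H) (F := H) ℂ).symm '' (s ∩ Metric.closedBall 0 r))

/-- The closure of a set of operators in the weak operator topology. -/
def WOTClosure {H K : Type*} [NormedAddCommGroup H] [InnerProductSpace ℂ H]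
    [NormedAddCommGroup K] [InnerProductSpace ℂ K] (s : Set (H →L[ℂ] K)) : Set (H →L[ℂ] K) :=
  (ContinuousLinearMapWOT.linearEquiv (σ := RingHom.id ℂ) (E := H) (F := K) ℂ).symm ⁻¹' closure ((ContinuousLinearMapWOT.linearEquiv (σ := RingHom.id ℂ) (E := H) (F := K) ℂ).symm '' s)

/-- A unital normal `*`-representation of (the elements of) a von Neumann algebra `M` on a
Hilbert space `K`, encoded as a function on all of `B(H)` whose properties are imposed only on
members of `M`. -/
structure IsNormalRepOn {H K : Type*} [NormedAddCommGroup H] [InnerProductSpace ℂ H]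
    [CompleteSpace H] [NormedAddCommGroup K] [InnerProductSpace ℂ K] [CompleteSpace K]
    (M : VonNeumannAlgebra H) (π : (H →L[ℂ] H) → (K →L[ℂ] K)) : Prop where
  map_add : ∀ S ∈ M, ∀ T ∈ M, π (S + T) = π S + π T
  map_smul : ∀ (c : ℂ), ∀ T ∈ M, π (c • T) = c • π T
  map_mul : ∀ S ∈ M, ∀ T ∈ M, π (S * T) = π S * π T
  map_star : ∀ T ∈ M, π (star T) = star (π T)
  map_one : π 1 = 1
  normal : WOTContinuousOnBalls (M : Set (H →L[ℂ] H)) π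

/-- A completely positive linear map of a von Neumann algebra `M` into itself. -/
structure IsCPMapOn {H : Type*} [NormedAddCommGroup H] [InnerProductSpace ℂ H] [CompleteSpace H]
    (M : VonNeumannAlgebra H) (P : (H →L[ℂ] H) → (H →L[ℂ] H)) : Prop where
  map_mem : ∀ T ∈ M, P T ∈ M
  map_add : ∀ S ∈ M, ∀ T ∈ M, P (S + T) = P S + P T
  map_smul : ∀ (c : ℂ), ∀ T ∈ M, P (c • T) = c • P T
  cp : IsCPOn M P

/-- A normal, unital, completely positive map on a von Neumann algebra `M`. -/
structure IsUNCPMapOn {H : Type*} [NormedAddCommGroup H] [InnerProductSpace ℂ H] [CompleteSpace H]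
    (M : VonNeumannAlgebra H) (P : (H →L[ℂ] H) → (H →L[ℂ] H))
    extends IsCPMapOn M P : Prop where
  map_one : P 1 = 1
  normal : WOTContinuousOnBalls (M : Set (H →L[ℂ] H)) P

/-- A Stinespring triple `(π, K, W)` for `P`: `π` is a unital normal `*`-representation of `M`
on `K`, `W : H → K` is an isometry, and `P T = W* (π T) W` for `T ∈ M`. -/
structure IsStinespring {H K : Type*} [NormedAddCommGroup H] [InnerProductSpace ℂ H]
    [CompleteSpace H] [NormedAddCommGroup K] [InnerProductSpace ℂ K] [CompleteSpace K]
    (M : VonNeumannAlgebra H) (P : (H →L[ℂ] H) → (H →L[ℂ] H))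
    (π : (H →L[ℂ] H) → (K →L[ℂ] K)) (W : H →L[ℂ] K) : Prop where
  rep : IsNormalRepOn M π
  isometry : ∀ h : H, ‖W h‖ = ‖h‖
  dilation : ∀ T ∈ M, P T = ContinuousLinearMap.adjoint W ∘L (π T ∘L W)

/-- A minimal Stinespring triple: additionally `{π(T) W h}` has dense span in `K`. -/
structure IsMinimalStinespring {H K : Type*} [NormedAddCommGroup H] [InnerProductSpace ℂ H]
    [CompleteSpace H] [NormedAddCommGroup K] [InnerProductSpace ℂ K] [CompleteSpace K]
    (M : VonNeumannAlgebra H) (P : (H →L[ℂ] H) → (H →L[ℂ] H))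
    (π : (H →L[ℂ] H) → (K →L[ℂ] K)) (W : H →L[ℂ] K)
    extends IsStinespring M P π W : Prop where
  minimal :
    (Submodule.span ℂ {k : K | ∃ T ∈ M, ∃ h : H, k = π T (W h)}).topologicalClosure = ⊤

/-- The `P`-boundedness condition with constant `C` for an operator `Y ∈ B(H)`:
`‖∑ᵢ Sᵢ Y* hᵢ‖² ≤ C ∑ᵢⱼ ⟨hᵢ, P(Sᵢ* Sⱼ) hⱼ⟩` for all `Sᵢ ∈ M` and `hᵢ ∈ H`. -/
def PBound {H : Type*} [NormedAddCommGroup H] [InnerProductSpace ℂ H] [CompleteSpace H]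
    (M : VonNeumannAlgebra H) (P : (H →L[ℂ] H) → (H →L[ℂ] H))
    (Y : H →L[ℂ] H) (C : ℝ) : Prop :=
  ∀ (n : ℕ) (S : Fin n → (H →L[ℂ] H)), (∀ i, S i ∈ M) → ∀ h : Fin n → H,
    ((‖∑ i, S i (ContinuousLinearMap.adjoint Y (h i))‖ ^ 2 : ℝ) : ℂ) ≤
      (C : ℂ) * ∑ i, ∑ j, (inner ℂ (h i) (P (star (S i) * S j) (h j)) : ℂ)

/-- The Arveson correspondence of `P`: all `Y ∈ B(H)` satisfying the `P`-boundedness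
condition with some nonnegative constant. -/
def ArvesonCorrespondence {H : Type*} [NormedAddCommGroup H] [InnerProductSpace ℂ H]
    [CompleteSpace H] (M : VonNeumannAlgebra H) (P : (H →L[ℂ] H) → (H →L[ℂ] H)) :
    Set (H →L[ℂ] H) :=
  {Y | ∃ C : ℝ, 0 ≤ C ∧ PBound M P Y C}

/-- A cp-semigroup on `M`: a semigroup `{P_t}_{t ≥ 0}` of unital, normal, completely positive
maps on `M` with `P_0 = id`. -/
structure IsCpSemigroup {H : Type*} [NormedAddCommGroup H] [InnerProductSpace ℂ H]
    [CompleteSpace H] (M : VonNeumannAlgebra H)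
    (P : ℝ → (H →L[ℂ] H) → (H →L[ℂ] H)) : Prop where
  uncp : ∀ t : ℝ, 0 ≤ t → IsUNCPMapOn M (P t)
  id_zero : ∀ T ∈ M, P 0 T = T
  comp : ∀ s t : ℝ, 0 ≤ s → 0 ≤ t → ∀ T ∈ M, P (t + s) T = P t (P s T)

/-- Weak continuity of a cp-semigroup: `t ↦ ⟨P_t(a) h, k⟩` is continuous on `[0, ∞)`. -/
def IsWeaklyContinuousSemigroup {H : Type*} [NormedAddCommGroup H] [InnerProductSpace ℂ H]
    [CompleteSpace H] (M : VonNeumannAlgebra H)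
    (P : ℝ → (H →L[ℂ] H) → (H →L[ℂ] H)) : Prop :=
  ∀ T ∈ M, ∀ h k : H,
    ContinuousOn (fun t : ℝ => (inner ℂ ((P t T) h) k : ℂ)) (Set.Ici (0 : ℝ))

/-- A semigroup `{α_t}_{t ≥ 0}` of unital, normal `*`-endomorphisms of a von Neumann
algebra `R`, with `α_0 = id`. -/
structure IsEndoSemigroup {K : Type*} [NormedAddCommGroup K] [InnerProductSpace ℂ K]
    [CompleteSpace K] (R : VonNeumannAlgebra K)
    (α : ℝ → (K →L[ℂ] K) → (K →L[ℂ] K)) : Prop where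
  rep : ∀ t : ℝ, 0 ≤ t → IsNormalRepOn R (α t)
  map_mem : ∀ t : ℝ, 0 ≤ t → ∀ S ∈ R, α t S ∈ R
  id_zero : ∀ S ∈ R, α 0 S = S
  comp : ∀ s t : ℝ, 0 ≤ s → 0 ≤ t → ∀ S ∈ R, α (t + s) S = α t (α s S)

namespace CLTaux

variable {H K : Type*}
    [NormedAddCommGroup H] [InnerProductSpace ℂ H] [CompleteSpace H]
    [NormedAddCommGroup K] [InnerProductSpace ℂ K] [CompleteSpace K]
    {M : VonNeumannAlgebra H} {P : (H →L[ℂ] H) → (H →L[ℂ] H)}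
    {π : (H →L[ℂ] H) → (K →L[ℂ] K)} {W : H →L[ℂ] K}

structure IsStinespring' (M : VonNeumannAlgebra H) (P : (H →L[ℂ] H) → (H →L[ℂ] H))
    (π : (H →L[ℂ] H) → (K →L[ℂ] K)) (W : H →L[ℂ] K) : Prop where
  map_mem : ∀ T ∈ M, P T ∈ M
  map_mul : ∀ S ∈ M, ∀ T ∈ M, π (S * T) = π S * π T
  map_star : ∀ T ∈ M, π (star T) = star (π T)
  dilation : ∀ T ∈ M, P T = ContinuousLinearMap.adjoint W ∘L (π T ∘L W)

lemma L0 (hst : IsStinespring' M P π W) {T T' : H →L[ℂ] H} (hT : T ∈ M) (hT' : T' ∈ M)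
    (a b : H) : (inner ℂ (π T (W a)) (π T' (W b)) : ℂ) = inner ℂ a (P (star T * T') b) := by
  have h1 : star T ∈ M := star_mem hT
  have h2 : star T * T' ∈ M := mul_mem h1 hT'
  have e1 : (inner ℂ (π T (W a)) (π T' (W b)) : ℂ)
      = inner ℂ (W a) ((ContinuousLinearMap.adjoint (π T)) (π T' (W b))) := by
    rw [ContinuousLinearMap.adjoint_inner_right]
  rw [e1, ← ContinuousLinearMap.star_eq_adjoint, ← hst.map_star T hT]
  have e2 : π (star T) (π T' (W b)) = π (star T * T') (W b) := by
    rw [hst.map_mul _ h1 _ hT']; rfl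
  rw [e2, ← ContinuousLinearMap.adjoint_inner_right, hst.dilation _ h2]
  rfl

set_option maxHeartbeats 1000000 in
lemma KB (hst : IsStinespring' M P π W)
    {S : H →L[ℂ] H} (hS : S ∈ M.commutant) {ι : Type*} (s : Finset ι)
    (T : ι → H →L[ℂ] H) (hT : ∀ i ∈ s, T i ∈ M) (h : ι → H) :
    ‖∑ i ∈ s, π (T i) (W (S (h i)))‖ ≤ ‖S‖ * ‖∑ i ∈ s, π (T i) (W (h i))‖ := by
  classical
  set C : H →L[ℂ] H := star S * S with hCdef
  have hC : C ∈ M.commutant := mul_mem (star_mem hS) hS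
  have hS' : star S ∈ M.commutant := star_mem hS
  have hCsa : ContinuousLinearMap.adjoint C = C := by
    rw [← ContinuousLinearMap.star_eq_adjoint, hCdef, star_mul, star_star]
  set g : ℕ → K := fun m => ∑ i ∈ s, π (T i) (W ((C ^ m) (h i))) with hgdef
  set v : K := ∑ i ∈ s, π (T i) (W (S (h i))) with hvdef
  -- commutation of C with P-values
  have hcomm : ∀ Q ∈ M, ∀ x : H, C (Q x) = Q (C x) := by
    intro Q hQ x
    have := (VonNeumannAlgebra.mem_commutant_iff.mp hC) Q hQ
    calc C (Q x) = (C * Q) x := rfl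
      _ = (Q * C) x := by rw [this]
      _ = Q (C x) := rfl
  have hcommS : ∀ Q ∈ M, ∀ x : H, (star S) (Q x) = Q ((star S) x) := by
    intro Q hQ x
    have := (VonNeumannAlgebra.mem_commutant_iff.mp hS') Q hQ
    calc (star S) (Q x) = ((star S) * Q) x := rfl
      _ = (Q * star S) x := by rw [this]
      _ = Q ((star S) x) := rfl
  have hCadj : ∀ z w : H, (inner ℂ (C z) w : ℂ) = inner ℂ z (C w) := by
    intro z w
    rw [← hCsa, ContinuousLinearMap.adjoint_inner_left, hCsa]
  -- step 1
  have ip : ∀ i ∈ s, ∀ j ∈ s, ∀ a b : H, (inner ℂ (π (T i) (W a)) (π (T j) (W b)) : ℂ)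
      = inner ℂ a (P (star (T i) * T j) b) := fun i hi j hj a b => L0 hst (hT i hi) (hT j hj) a b
  have step1 : ∀ a b : ℕ, (inner ℂ (g (a+1)) (g b) : ℂ) = inner ℂ (g a) (g (b+1)) := by
    intro a b
    rw [hgdef]
    simp only [sum_inner, inner_sum]
    refine Finset.sum_congr rfl fun i hi => Finset.sum_congr rfl fun j hj => ?_
    have hQ : P (star (T j) * T i) ∈ M := hst.map_mem _ (mul_mem (star_mem (hT j hj)) (hT i hi))
    rw [ip j hj i hi, ip j hj i hi]
    have e1 : (C ^ (a+1)) (h j) = C ((C ^ a) (h j)) := by rw [pow_succ']; rfl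
    have e2 : (C ^ (b+1)) (h i) = C ((C ^ b) (h i)) := by rw [pow_succ']; rfl
    rw [e1, e2, hCadj, hcomm _ hQ]
  have step2 : ∀ a b : ℕ, (inner ℂ (g a) (g b) : ℂ) = inner ℂ (g 0) (g (a+b)) := by
    intro a
    induction a with
    | zero => intro b; simp
    | succ n ih =>
      intro b
      rw [step1 n b, ih (b+1)]
      ring_nf
  -- v inner ℂ
  have hv2 : (inner ℂ v v : ℂ) = inner ℂ (g 0) (g 1) := by
    rw [hvdef, hgdef]
    simp only [sum_inner, inner_sum]
    refine Finset.sum_congr rfl fun i hi => Finset.sum_congr rfl fun j hj => ?_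
    have hQ : P (star (T j) * T i) ∈ M := hst.map_mem _ (mul_mem (star_mem (hT j hj)) (hT i hi))
    rw [ip j hj i hi, ip j hj i hi]
    have e1 : (inner ℂ (S (h j)) (P (star (T j) * T i) (S (h i))) : ℂ)
        = inner ℂ (h j) ((star S) (P (star (T j) * T i) (S (h i)))) := by
      rw [← ContinuousLinearMap.adjoint_inner_right, ← ContinuousLinearMap.star_eq_adjoint]
    rw [e1, hcommS _ hQ]
    have e2 : (C ^ 1) (h i) = (star S) (S (h i)) := by rw [pow_one]; rfl
    rw [e2]
    simp
  -- norms
  have hg0 : g 0 = ∑ i ∈ s, π (T i) (W (h i)) := by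
    simp [hgdef]
  set N : ℝ := ‖g 0‖ with hN
  set B : ℝ := ∑ i ∈ s, ‖π (T i) ∘L W‖ * ‖h i‖ with hBdef
  have hB0 : 0 ≤ B := Finset.sum_nonneg fun i _ => mul_nonneg (norm_nonneg _) (norm_nonneg _)
  have hNnn : 0 ≤ N := norm_nonneg _
  have hsq : ∀ w : K, ‖w‖ ^ 2 = ‖(inner ℂ w w : ℂ)‖ := by
    intro w
    rw [@inner_self_eq_norm_sq_to_K ℂ]
    simp [norm_pow]
  have F1 : ‖v‖ ^ 2 ≤ N * ‖g 1‖ := by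
    rw [hsq, hv2]
    exact norm_inner_le_norm _ _
  have F2 : ∀ m : ℕ, ‖g m‖ ^ 2 ≤ N * ‖g (2 * m)‖ := by
    intro m
    rw [hsq, step2 m m, two_mul]
    exact norm_inner_le_norm _ _
  have hCn : ∀ m : ℕ, ‖C ^ m‖ ≤ ‖S‖ ^ (2 * m) := by
    intro m
    induction m with
    | zero => simp only [pow_zero, mul_zero]; exact ContinuousLinearMap.norm_id_le
    | succ n ih =>
      calc ‖C ^ (n+1)‖ = ‖C ^ n * C‖ := by rw [pow_succ]
        _ ≤ ‖C ^ n‖ * ‖C‖ := norm_mul_le _ _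
        _ ≤ ‖S‖ ^ (2*n) * (‖S‖ * ‖S‖) := by
            refine mul_le_mul ih ?_ (norm_nonneg _) (by positivity)
            calc ‖C‖ ≤ ‖star S‖ * ‖S‖ := norm_mul_le _ _
              _ = ‖S‖ * ‖S‖ := by rw [norm_star]
        _ = ‖S‖ ^ (2*(n+1)) := by ring
  have F3 : ∀ m : ℕ, ‖g m‖ ≤ B * ‖S‖ ^ (2 * m) := by
    intro m
    rw [hgdef]
    calc ‖∑ i ∈ s, π (T i) (W ((C ^ m) (h i)))‖
        ≤ ∑ i ∈ s, ‖π (T i) (W ((C ^ m) (h i)))‖ := norm_sum_le _ _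
      _ ≤ ∑ i ∈ s, (‖π (T i) ∘L W‖ * ‖h i‖) * ‖S‖ ^ (2*m) := by
          refine Finset.sum_le_sum fun i hi => ?_
          have h1 : ‖π (T i) (W ((C ^ m) (h i)))‖ ≤ ‖π (T i) ∘L W‖ * ‖(C ^ m) (h i)‖ :=
            (π (T i) ∘L W).le_opNorm _
          have h2 : ‖(C ^ m) (h i)‖ ≤ ‖C ^ m‖ * ‖h i‖ := (C ^ m).le_opNorm _
          have h3 : ‖C ^ m‖ * ‖h i‖ ≤ ‖S‖ ^ (2*m) * ‖h i‖ :=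
            mul_le_mul_of_nonneg_right (hCn m) (norm_nonneg _)
          calc ‖π (T i) (W ((C ^ m) (h i)))‖ ≤ ‖π (T i) ∘L W‖ * ‖(C ^ m) (h i)‖ := h1
            _ ≤ ‖π (T i) ∘L W‖ * (‖S‖ ^ (2*m) * ‖h i‖) :=
                mul_le_mul_of_nonneg_left (h2.trans h3) (norm_nonneg _)
            _ = (‖π (T i) ∘L W‖ * ‖h i‖) * ‖S‖ ^ (2*m) := by ring
      _ = B * ‖S‖ ^ (2*m) := by rw [hBdef, Finset.sum_mul]
  -- goal reduction
  rw [← hg0]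
  by_cases hNz : N = 0
  · have h1 : ‖v‖ ^ 2 ≤ 0 := by rw [hNz] at F1; simpa using F1
    have hv0 : ‖v‖ = 0 := by nlinarith [norm_nonneg v]
    rw [hv0]; positivity
  by_cases hBz : B = 0
  · have h1 : ‖g 1‖ ≤ 0 := by
      have := F3 1; rw [hBz] at this; simpa using this
    have h2 : ‖v‖ ^ 2 ≤ 0 := le_trans F1 (by nlinarith)
    have hv0 : ‖v‖ = 0 := by nlinarith [norm_nonneg v]
    rw [hv0]; positivity
  have hNpos : 0 < N := lt_of_le_of_ne hNnn (Ne.symm hNz)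
  have hBpos : 0 < B := lt_of_le_of_ne hB0 (Ne.symm hBz)
  set ε : ℕ → ℝ := fun k => ((2:ℝ)⁻¹) ^ k with hεdef
  have hεpos : ∀ k, 0 < ε k := fun k => pow_pos (by norm_num) k
  have hεsucc : ∀ k, ε (k+1) = 2⁻¹ * ε k := fun k => pow_succ' _ _
  have main : ∀ k : ℕ, ‖v‖ ^ 2 ≤ N ^ ((2:ℝ) - ε k) * ‖g (2 ^ k)‖ ^ (ε k) := by
    intro k
    induction k with
    | zero =>
      have e1 : ε 0 = 1 := pow_zero _
      have e2 : (2:ℕ) ^ 0 = 1 := pow_zero _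
      rw [e1, e2, show (2:ℝ) - 1 = 1 by norm_num, Real.rpow_one, Real.rpow_one]
      exact F1
    | succ n ih =>
      have hsqle : ‖g (2 ^ n)‖ ^ (2:ℕ) ≤ N * ‖g (2 ^ (n+1))‖ := by
        have := F2 (2 ^ n)
        rwa [← pow_succ'] at this
      have h2 : ‖g (2 ^ n)‖ ≤ (N * ‖g (2 ^ (n+1))‖) ^ ((2:ℝ)⁻¹) := by
        calc ‖g (2 ^ n)‖ = ((‖g (2 ^ n)‖ ^ (2:ℕ)) : ℝ) ^ ((2:ℝ)⁻¹) := by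
              rw [← Real.rpow_natCast ‖g (2 ^ n)‖ 2, ← Real.rpow_mul (norm_nonneg _)]
              norm_num
          _ ≤ (N * ‖g (2 ^ (n+1))‖) ^ ((2:ℝ)⁻¹) :=
              Real.rpow_le_rpow (by positivity) hsqle (by norm_num)
      calc ‖v‖ ^ 2 ≤ N ^ ((2:ℝ) - ε n) * ‖g (2 ^ n)‖ ^ (ε n) := ih
        _ ≤ N ^ ((2:ℝ) - ε n) * ((N * ‖g (2 ^ (n+1))‖) ^ ((2:ℝ)⁻¹)) ^ (ε n) := by
            refine mul_le_mul_of_nonneg_left ?_ (by positivity)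
            exact Real.rpow_le_rpow (norm_nonneg _) h2 (hεpos n).le
        _ = N ^ ((2:ℝ) - ε (n+1)) * ‖g (2 ^ (n+1))‖ ^ (ε (n+1)) := by
            rw [← Real.rpow_mul (by positivity : (0:ℝ) ≤ N * ‖g (2 ^ (n+1))‖),
                Real.mul_rpow hNnn (norm_nonneg _), ← mul_assoc,
                ← Real.rpow_add hNpos, hεsucc n]
            have harith : (2:ℝ) - ε n + 2⁻¹ * ε n = 2 - 2⁻¹ * ε n := by ring
            rw [harith]
  have final : ∀ k : ℕ, ‖v‖ ^ 2 ≤ N ^ ((2:ℝ) - ε k) * B ^ (ε k) * ‖S‖ ^ 2 := by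
    intro k
    have h3 : ‖g (2 ^ k)‖ ^ (ε k) ≤ (B * ‖S‖ ^ (2 * 2 ^ k)) ^ (ε k) :=
      Real.rpow_le_rpow (norm_nonneg _) (F3 (2 ^ k)) (hεpos k).le
    have h4 : (B * ‖S‖ ^ (2 * 2 ^ k)) ^ (ε k) = B ^ (ε k) * ‖S‖ ^ 2 := by
      rw [Real.mul_rpow hB0 (pow_nonneg (norm_nonneg S) _)]
      congr 1
      rw [← Real.rpow_natCast ‖S‖ (2 * 2 ^ k), ← Real.rpow_mul (norm_nonneg _)]
      have he : ((2 * 2 ^ k : ℕ) : ℝ) * ε k = 2 := by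
        rw [hεdef]
        push_cast
        rw [inv_pow]
        field_simp
      rw [he]
      rw [show ((2:ℝ)) = ((2:ℕ):ℝ) by norm_num, Real.rpow_natCast]
    calc ‖v‖ ^ 2 ≤ N ^ ((2:ℝ) - ε k) * ‖g (2 ^ k)‖ ^ (ε k) := main k
      _ ≤ N ^ ((2:ℝ) - ε k) * (B ^ (ε k) * ‖S‖ ^ 2) := by
          rw [← h4]
          exact mul_le_mul_of_nonneg_left h3 (by positivity)
      _ = N ^ ((2:ℝ) - ε k) * B ^ (ε k) * ‖S‖ ^ 2 := by ring
  have hεlim : Filter.Tendsto ε Filter.atTop (nhds 0) :=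
    tendsto_pow_atTop_nhds_zero_of_lt_one (by norm_num) (by norm_num)
  have l1 : Filter.Tendsto (fun k => N ^ ((2:ℝ) - ε k)) Filter.atTop (nhds (N ^ (2:ℝ))) := by
    have h2' : Filter.Tendsto (fun k => (2:ℝ) - ε k) Filter.atTop (nhds 2) := by
      simpa using Filter.Tendsto.const_sub (2:ℝ) hεlim
    exact (Real.continuousAt_const_rpow (ne_of_gt hNpos)).tendsto.comp h2'
  have l2 : Filter.Tendsto (fun k => B ^ (ε k)) Filter.atTop (nhds 1) := by
    have := (Real.continuousAt_const_rpow (ne_of_gt hBpos)).tendsto.comp hεlim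
    simpa [Real.rpow_zero, Function.comp_def] using this
  have llim : Filter.Tendsto (fun k => N ^ ((2:ℝ) - ε k) * B ^ (ε k) * ‖S‖ ^ 2)
      Filter.atTop (nhds (N ^ (2:ℝ) * 1 * ‖S‖ ^ 2)) := (l1.mul l2).mul_const _
  have hle : ‖v‖ ^ 2 ≤ N ^ (2:ℝ) * 1 * ‖S‖ ^ 2 := ge_of_tendsto' llim final
  have hN2 : N ^ (2:ℝ) = N ^ 2 := by
    rw [show ((2:ℝ)) = ((2:ℕ):ℝ) by norm_num, Real.rpow_natCast]
  have hfin : ‖v‖ ^ 2 ≤ (‖S‖ * N) ^ 2 := by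
    rw [hN2] at hle
    nlinarith [hle]
  calc ‖v‖ = Real.sqrt (‖v‖ ^ 2) := by rw [Real.sqrt_sq (norm_nonneg _)]
    _ ≤ Real.sqrt ((‖S‖ * N) ^ 2) := Real.sqrt_le_sqrt hfin
    _ = ‖S‖ * N := Real.sqrt_sq (by positivity)


lemma dense_span
    (hmin : (Submodule.span ℂ {k : K | ∃ T ∈ M, ∃ h : H, k = π T (W h)}).topologicalClosure = ⊤) :
    Dense ((Submodule.span ℂ {k : K | ∃ T ∈ M, ∃ h : H, k = π T (W h)} : Submodule ℂ K) : Set K) := by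
  rw [dense_iff_closure_eq, ← Submodule.topologicalClosure_coe, hmin]
  rfl

lemma ext_gen
    (hmin : (Submodule.span ℂ {k : K | ∃ T ∈ M, ∃ h : H, k = π T (W h)}).topologicalClosure = ⊤)
    {A B : K →L[ℂ] K}
    (hAB : ∀ T ∈ M, ∀ h : H, A (π T (W h)) = B (π T (W h))) : A = B := by
  refine ContinuousLinearMap.ext_on (dense_span hmin) ?_
  rintro x ⟨T, hT, h, rfl⟩
  exact hAB T hT h

lemma vec_ext
    (hmin : (Submodule.span ℂ {k : K | ∃ T ∈ M, ∃ h : H, k = π T (W h)}).topologicalClosure = ⊤)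
    {x y : K}
    (hxy : ∀ T ∈ M, ∀ h : H, (inner ℂ x (π T (W h)) : ℂ) = inner ℂ y (π T (W h))) : x = y := by
  have hall : ∀ v ∈ Submodule.span ℂ {k : K | ∃ T ∈ M, ∃ h : H, k = π T (W h)},
      (inner ℂ x v : ℂ) = inner ℂ y v := by
    intro v hv
    induction hv using Submodule.span_induction with
    | mem v hv => obtain ⟨T, hT, h, rfl⟩ := hv; exact hxy T hT h
    | zero => simp
    | add a b _ _ ha hb => simp [inner_add_right, ha, hb]
    | smul c a _ ha => simp [inner_smul_right, ha]
  exact (dense_span hmin).eq_of_inner_left ℂ fun v hv => hall v hv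

lemma normal_phi
    (hmin : (Submodule.span ℂ {k : K | ∃ T ∈ M, ∃ h : H, k = π T (W h)}).topologicalClosure = ⊤)
    {φ : (H →L[ℂ] H) → (K →L[ℂ] K)}
    (hφgen : ∀ S ∈ M.commutant, ∀ T ∈ M, ∀ h : H, φ S (π T (W h)) = π T (W (S h)))
    (hφn : ∀ S ∈ M.commutant, ‖φ S‖ ≤ ‖S‖) :
    WOTContinuousOnBalls (M.commutant : Set (H →L[ℂ] H)) φ := by
  intro r
  set s : Set (H →WOT[ℂ] H) := (ContinuousLinearMapWOT.linearEquiv (σ := RingHom.id ℂ) (E := H) (F := H) ℂ).symm ''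
    ((M.commutant : Set (H →L[ℂ] H)) ∩ Metric.closedBall 0 r) with hs
  set rr : ℝ := max r 0 with hrr
  -- operators from points of s
  have hmem : ∀ p ∈ s, (((ContinuousLinearMapWOT.linearEquiv (σ := RingHom.id ℂ) (E := H) (F := H) ℂ).symm).symm p) ∈ M.commutant ∧
      ‖(((ContinuousLinearMapWOT.linearEquiv (σ := RingHom.id ℂ) (E := H) (F := H) ℂ).symm).symm p : H →L[ℂ] H)‖ ≤ rr := by
    rintro p ⟨Sq, ⟨hSq1, hSq2⟩, rfl⟩
    rw [LinearEquiv.symm_apply_apply]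
    refine ⟨hSq1, ?_⟩
    have := Metric.mem_closedBall.mp hSq2
    rw [dist_zero_right] at this
    exact this.trans (le_max_left _ _)
  -- Step 1: continuity for x' in the span
  have claim1 : ∀ x' ∈ Submodule.span ℂ {k : K | ∃ T ∈ M, ∃ h : H, k = π T (W h)}, ∀ z' : K,
      ContinuousOn (fun p : H →WOT[ℂ] H =>
        (inner ℂ z' (φ (((ContinuousLinearMapWOT.linearEquiv (σ := RingHom.id ℂ) (E := H) (F := H) ℂ).symm).symm p) x') : ℂ)) s := by
    intro x' hx' z'
    induction hx' using Submodule.span_induction with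
    | mem v hv =>
      obtain ⟨T, hT, h, rfl⟩ := hv
      have hcont : Continuous (fun p : H →WOT[ℂ] H =>
          (InnerProductSpace.toDual ℂ H (ContinuousLinearMap.adjoint (π T ∘L W) z')) (p h)) :=
        ContinuousLinearMapWOT.continuous_dual_apply h _
      refine (hcont.continuousOn).congr ?_
      intro p hp
      have hSp := (hmem p hp).1
      show (inner ℂ z' (φ (((ContinuousLinearMapWOT.linearEquiv (σ := RingHom.id ℂ) (E := H) (F := H) ℂ).symm).symm p) (π T (W h))) : ℂ)
          = (InnerProductSpace.toDual ℂ H ((ContinuousLinearMap.adjoint (π T ∘L W)) z')) (p h)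
      rw [hφgen _ hSp T hT h, InnerProductSpace.toDual_apply_apply,
        ContinuousLinearMap.adjoint_inner_left]
      rfl
    | zero =>
      have : (fun p : H →WOT[ℂ] H =>
          (inner ℂ z' (φ (((ContinuousLinearMapWOT.linearEquiv (σ := RingHom.id ℂ) (E := H) (F := H) ℂ).symm).symm p) (0:K)) : ℂ)) =
          fun _ => (0:ℂ) := by
        funext p; simp
      rw [this]
      exact continuousOn_const
    | add a b _ _ iha ihb =>
      have : (fun p : H →WOT[ℂ] H =>
          (inner ℂ z' (φ (((ContinuousLinearMapWOT.linearEquiv (σ := RingHom.id ℂ) (E := H) (F := H) ℂ).symm).symm p) (a + b)) : ℂ)) =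
          (fun p => (inner ℂ z' (φ (((ContinuousLinearMapWOT.linearEquiv (σ := RingHom.id ℂ) (E := H) (F := H) ℂ).symm).symm p) a) : ℂ) +
            (inner ℂ z' (φ (((ContinuousLinearMapWOT.linearEquiv (σ := RingHom.id ℂ) (E := H) (F := H) ℂ).symm).symm p) b) : ℂ)) := by
        funext p
        rw [map_add, inner_add_right]
      rw [this]
      exact iha.add ihb
    | smul c a _ iha =>
      have : (fun p : H →WOT[ℂ] H =>
          (inner ℂ z' (φ (((ContinuousLinearMapWOT.linearEquiv (σ := RingHom.id ℂ) (E := H) (F := H) ℂ).symm).symm p) (c • a)) : ℂ)) =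
          (fun p => c * (inner ℂ z' (φ (((ContinuousLinearMapWOT.linearEquiv (σ := RingHom.id ℂ) (E := H) (F := H) ℂ).symm).symm p) a) : ℂ)) := by
        funext p
        rw [map_smul, inner_smul_right]
      rw [this]
      exact continuousOn_const.mul iha
  -- Step 2
  intro p₀ hp₀
  rw [ContinuousWithinAt, ContinuousLinearMapWOT.tendsto_iff_forall_dual_apply_tendsto]
  intro x y
  set z : K := (InnerProductSpace.toDual ℂ K).symm y with hz
  have hy : ∀ w : K, y w = inner ℂ z w := by
    intro w
    rw [hz, ← InnerProductSpace.toDual_apply_apply, LinearIsometryEquiv.apply_symm_apply]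
  have hrw : (fun p : H →WOT[ℂ] H => y (((ContinuousLinearMapWOT.linearEquiv (σ := RingHom.id ℂ) (E := K) (F := K) ℂ).symm
      (φ (((ContinuousLinearMapWOT.linearEquiv (σ := RingHom.id ℂ) (E := H) (F := H) ℂ).symm).symm p))) x)) =
      fun p : H →WOT[ℂ] H => (inner ℂ z (φ (((ContinuousLinearMapWOT.linearEquiv (σ := RingHom.id ℂ) (E := H) (F := H) ℂ).symm).symm p) x) : ℂ) := by
    funext p
    rw [hy]
    rfl
  have hlim : y (((ContinuousLinearMapWOT.linearEquiv (σ := RingHom.id ℂ) (E := K) (F := K) ℂ).symm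
      (φ (((ContinuousLinearMapWOT.linearEquiv (σ := RingHom.id ℂ) (E := H) (F := H) ℂ).symm).symm p₀))) x)
      = (inner ℂ z (φ (((ContinuousLinearMapWOT.linearEquiv (σ := RingHom.id ℂ) (E := H) (F := H) ℂ).symm).symm p₀) x) : ℂ) := by
    rw [hy]; rfl
  rw [hrw, hlim]
  set g : (H →WOT[ℂ] H) → ℂ :=
    fun p => (inner ℂ z (φ (((ContinuousLinearMapWOT.linearEquiv (σ := RingHom.id ℂ) (E := H) (F := H) ℂ).symm).symm p) x) : ℂ) with hg
  rw [Metric.tendsto_nhds]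
  intro ε hε
  have hδpos : 0 < ε / (3 * (‖z‖ + 1) * (rr + 1)) := by positivity
  obtain ⟨x', hx'V, hx'close⟩ := Metric.mem_closure_iff.mp ((dense_span hmin) x)
    (ε / (3 * (‖z‖ + 1) * (rr + 1))) hδpos
  set g' : (H →WOT[ℂ] H) → ℂ :=
    fun p => (inner ℂ z (φ (((ContinuousLinearMapWOT.linearEquiv (σ := RingHom.id ℂ) (E := H) (F := H) ℂ).symm).symm p) x') : ℂ) with hg'
  have happrox : ∀ p ∈ s, dist (g p) (g' p) ≤ ε / 3 := by
    intro p hp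
    obtain ⟨hSp, hSpn⟩ := hmem p hp
    have e1 : g p - g' p =
        inner ℂ z (φ (((ContinuousLinearMapWOT.linearEquiv (σ := RingHom.id ℂ) (E := H) (F := H) ℂ).symm).symm p) (x - x')) := by
      rw [hg, hg', map_sub, inner_sub_right]
    rw [dist_eq_norm, e1]
    have e2 : ‖(inner ℂ z (φ (((ContinuousLinearMapWOT.linearEquiv (σ := RingHom.id ℂ) (E := H) (F := H) ℂ).symm).symm p) (x - x')) : ℂ)‖
        ≤ ‖z‖ * ‖φ (((ContinuousLinearMapWOT.linearEquiv (σ := RingHom.id ℂ) (E := H) (F := H) ℂ).symm).symm p) (x - x')‖ :=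
      norm_inner_le_norm _ _
    have e3 : ‖φ (((ContinuousLinearMapWOT.linearEquiv (σ := RingHom.id ℂ) (E := H) (F := H) ℂ).symm).symm p) (x - x')‖ ≤ rr * ‖x - x'‖ := by
      refine le_trans ((φ _).le_opNorm _) ?_
      exact mul_le_mul_of_nonneg_right ((hφn _ hSp).trans hSpn) (norm_nonneg _)
    have e4 : ‖x - x'‖ < ε / (3 * (‖z‖ + 1) * (rr + 1)) := by
      rwa [← dist_eq_norm]
    have hrr0 : 0 ≤ rr := le_max_right _ _
    have hz0 : 0 ≤ ‖z‖ := norm_nonneg _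
    have hn0 : (0:ℝ) ≤ ‖x - x'‖ := norm_nonneg _
    have : ‖z‖ * (rr * ‖x - x'‖) ≤ ε / 3 := by
      have hstep1 : ‖z‖ * (rr * ‖x - x'‖) ≤ (‖z‖ + 1) * ((rr + 1) * ‖x - x'‖) := by
        nlinarith
      have hstep2 : (‖z‖ + 1) * ((rr + 1) * ‖x - x'‖)
          ≤ (‖z‖ + 1) * ((rr + 1) * (ε / (3 * (‖z‖ + 1) * (rr + 1)))) := by
        refine mul_le_mul_of_nonneg_left ?_ (by linarith)
        exact mul_le_mul_of_nonneg_left e4.le (by linarith)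
      have h2 : (‖z‖ + 1) * ((rr + 1) * (ε / (3 * (‖z‖ + 1) * (rr + 1)))) = ε / 3 := by
        field_simp
      linarith
    calc ‖(inner ℂ z (φ (((ContinuousLinearMapWOT.linearEquiv (σ := RingHom.id ℂ) (E := H) (F := H) ℂ).symm).symm p) (x - x')) : ℂ)‖
        ≤ ‖z‖ * (rr * ‖x - x'‖) := e2.trans (by
          exact mul_le_mul_of_nonneg_left e3 (norm_nonneg z))
      _ ≤ ε / 3 := this
  have hcont' : Filter.Tendsto g' (nhdsWithin p₀ s) (nhds (g' p₀)) :=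
    claim1 x' hx'V z p₀ hp₀
  have hev1 : ∀ᶠ p in nhdsWithin p₀ s, dist (g' p) (g' p₀) < ε / 3 :=
    (Metric.tendsto_nhds.mp hcont') (ε / 3) (by positivity)
  have hev2 : ∀ᶠ p in nhdsWithin p₀ s, p ∈ s := self_mem_nhdsWithin
  filter_upwards [hev1, hev2] with p h1 h2
  have d1 : dist (g p) (g' p) ≤ ε / 3 := happrox p h2
  have d3 : dist (g' p₀) (g p₀) ≤ ε / 3 := by
    rw [dist_comm]; exact happrox p₀ hp₀
  calc dist (g p) (g p₀) ≤ dist (g p) (g' p) + dist (g' p) (g' p₀) + dist (g' p₀) (g p₀) :=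
        dist_triangle4 _ _ _ _
    _ < ε / 3 + ε / 3 + ε / 3 := by
        have := h1
        linarith
    _ = ε := by ring


lemma exists_Phi
    (hkb : ∀ {S : H →L[ℂ] H}, S ∈ M.commutant → ∀ (s : Finset ↥M)
      (T : ↥M → H →L[ℂ] H), (∀ i ∈ s, T i ∈ M) → ∀ h : ↥M → H,
      ‖∑ i ∈ s, π (T i) (W (S (h i)))‖ ≤ ‖S‖ * ‖∑ i ∈ s, π (T i) (W (h i))‖)
    (hmin : (Submodule.span ℂ {k : K | ∃ T ∈ M, ∃ h : H, k = π T (W h)}).topologicalClosure = ⊤)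
    {S : H →L[ℂ] H} (hS : S ∈ M.commutant) :
    ∃ A : K →L[ℂ] K, (∀ T ∈ M, ∀ h : H, A (π T (W h)) = π T (W (S h))) ∧ ‖A‖ ≤ ‖S‖ := by
  classical
  set gen : Set K := {k : K | ∃ T ∈ M, ∃ h : H, k = π T (W h)} with hgen
  set V : Submodule ℂ K := Submodule.span ℂ gen with hV
  set u : ((↥M) →₀ H) →ₗ[ℂ] K :=
    Finsupp.lsum ℂ (fun T : ↥M => ((π ↑T).comp W).toLinearMap) with hu
  set vS : ((↥M) →₀ H) →ₗ[ℂ] K :=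
    Finsupp.lsum ℂ (fun T : ↥M => (((π ↑T).comp W).comp S).toLinearMap) with hvS
  have hueq : ∀ f : (↥M) →₀ H, u f = ∑ t ∈ f.support, π (↑t) (W (f t)) := by
    intro f; simp [hu, Finsupp.lsum_apply, Finsupp.sum]
  have hveq : ∀ f : (↥M) →₀ H, vS f = ∑ t ∈ f.support, π (↑t) (W (S (f t))) := by
    intro f; simp [hvS, Finsupp.lsum_apply, Finsupp.sum]
  have hub : ∀ f : (↥M) →₀ H, ‖vS f‖ ≤ ‖S‖ * ‖u f‖ := by
    intro f
    rw [hueq, hveq]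
    exact hkb hS f.support (fun t => ↑t) (fun t _ => t.2) (fun t => f t)
  have hker : ∀ f g : (↥M) →₀ H, u f = u g → vS f = vS g := by
    intro f g hfg
    have h2 : ‖vS (f - g)‖ ≤ ‖S‖ * ‖u (f - g)‖ := hub _
    rw [map_sub, map_sub, hfg, sub_self, norm_zero, mul_zero] at h2
    exact sub_eq_zero.mp (norm_le_zero_iff.mp h2)
  have husingle : ∀ (T : ↥M) (h : H), u (Finsupp.single T h) = π (↑T) (W h) := by
    intro T h
    simp [hu]
  have hvsingle : ∀ (T : ↥M) (h : H), vS (Finsupp.single T h) = π (↑T) (W (S h)) := by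
    intro T h
    simp [hvS]
  have hrange : ∀ x : ↥V, ∃ f : (↥M) →₀ H, u f = (x : K) := by
    intro x
    have hle : V ≤ LinearMap.range u := by
      rw [hV]
      refine Submodule.span_le.mpr ?_
      rintro k ⟨T, hT, h, rfl⟩
      exact ⟨Finsupp.single ⟨T, hT⟩ h, husingle ⟨T, hT⟩ h⟩
    exact hle x.2
  choose fx hfx using hrange
  have hwd : ∀ (x : ↥V) (f : (↥M) →₀ H), u f = (x : K) → vS (fx x) = vS f := by
    intro x f hf
    exact hker _ _ (by rw [hfx, hf])
  let φ₀ : ↥V →ₗ[ℂ] K :=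
    { toFun := fun x => vS (fx x)
      map_add' := by
        intro x y
        show vS (fx (x + y)) = vS (fx x) + vS (fx y)
        rw [hwd (x + y) (fx x + fx y) (by rw [map_add, hfx, hfx]; rfl), map_add]
      map_smul' := by
        intro c x
        show vS (fx (c • x)) = c • vS (fx x)
        rw [hwd (c • x) (c • fx x) (by rw [map_smul, hfx]; rfl), map_smul] }
  have hφ₀b : ∀ x : ↥V, ‖φ₀ x‖ ≤ ‖S‖ * ‖x‖ := by
    intro x
    have : ‖vS (fx x)‖ ≤ ‖S‖ * ‖u (fx x)‖ := hub _
    rwa [hfx] at this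
  let φc : ↥V →L[ℂ] K := φ₀.mkContinuous ‖S‖ hφ₀b
  have hdense : DenseRange (V.subtypeL) := by
    have hd : Dense (V : Set K) := dense_span hmin
    rw [DenseRange, Submodule.coe_subtypeL', Submodule.coe_subtype]
    rwa [Subtype.range_coe]
  have hbound : ∀ x : ↥V, ‖x‖ ≤ ((1 : NNReal) : ℝ) * ‖V.subtypeL x‖ := by
    intro x
    rw [NNReal.coe_one, one_mul, Submodule.subtypeL_apply]
    exact le_refl _
  set A : K →L[ℂ] K :=
    φc.extend V.subtypeL with hA
  refine ⟨A, ?_, ?_⟩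
  · intro T hT h
    have hxmem : π T (W h) ∈ V := Submodule.subset_span ⟨T, hT, h, rfl⟩
    have e1 : π T (W h) = V.subtypeL ⟨π T (W h), hxmem⟩ := rfl
    rw [e1, hA, ContinuousLinearMap.extend_eq φc hdense (isUniformEmbedding_of_bound _ hbound).isUniformInducing]
    show vS (fx ⟨π T (W h), hxmem⟩) = π T (W (S h))
    rw [hwd _ (Finsupp.single ⟨T, hT⟩ h) (husingle ⟨T, hT⟩ h)]
    exact hvsingle ⟨T, hT⟩ h
  · have h1 : ‖A‖ ≤ (1 : NNReal) * ‖φc‖ := ContinuousLinearMap.opNorm_extend_le φc hdense hbound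
    have h2 : ‖φc‖ ≤ ‖S‖ := φ₀.mkContinuous_norm_le (norm_nonneg S) hφ₀b
    simpa using h1.trans (by simpa using h2)


end CLTaux

/-- for a minimal Stinespring triple `(π, K, W)` of `P`, each `S ∈ M'` admits a
unique operator `φ(S)` on `K` commuting with `π(M)` and satisfying `φ(S) W = W S`; moreover
`‖φ(S)‖ ≤ ‖S‖` and `φ` is a normal unital `*`-homomorphism of `M'` into `π(M)'`. -/


theorem exists_commutant_lifting {H K : Type*}
    [NormedAddCommGroup H] [InnerProductSpace ℂ H] [CompleteSpace H]
    [NormedAddCommGroup K] [InnerProductSpace ℂ K] [CompleteSpace K]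
    (M : VonNeumannAlgebra H) (P : (H →L[ℂ] H) → (H →L[ℂ] H)) (hP : IsUNCPMapOn M P)
    (π : (H →L[ℂ] H) → (K →L[ℂ] K)) (W : H →L[ℂ] K)
    (hmin : IsMinimalStinespring M P π W) :
    ∃ φ : (H →L[ℂ] H) → (K →L[ℂ] K),
      (∀ S ∈ M.commutant,
        (∀ T ∈ M, φ S * π T = π T * φ S) ∧
        φ S ∘L W = W ∘L S ∧
        ‖φ S‖ ≤ ‖S‖ ∧
        (∀ B : K →L[ℂ] K, (∀ T ∈ M, B * π T = π T * B) → B ∘L W = W ∘L S → B = φ S)) ∧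
      IsNormalRepOn M.commutant φ := by
  classical
  have hst : CLTaux.IsStinespring' M P π W :=
    ⟨hP.map_mem, hmin.rep.map_mul, hmin.rep.map_star, hmin.dilation⟩
  have hmin' := hmin.minimal
  have hkb : ∀ {S : H →L[ℂ] H}, S ∈ M.commutant → ∀ (s : Finset ↥M)
      (T : ↥M → H →L[ℂ] H), (∀ i ∈ s, T i ∈ M) → ∀ h : ↥M → H,
      ‖∑ i ∈ s, π (T i) (W (S (h i)))‖ ≤ ‖S‖ * ‖∑ i ∈ s, π (T i) (W (h i))‖ :=
    fun hS s T hT h => CLTaux.KB hst hS s T hT h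
  set Φ : (H →L[ℂ] H) → (K →L[ℂ] K) := fun S =>
    if hS : S ∈ M.commutant then (CLTaux.exists_Phi @hkb hmin' hS).choose else 0 with hΦ
  have hgen : ∀ S, ∀ hS : S ∈ M.commutant, ∀ T ∈ M, ∀ h : H,
      Φ S (π T (W h)) = π T (W (S h)) := by
    intro S hS T hT h
    simp only [hΦ, dif_pos hS]
    exact (CLTaux.exists_Phi @hkb hmin' hS).choose_spec.1 T hT h
  have hnorm : ∀ S ∈ M.commutant, ‖Φ S‖ ≤ ‖S‖ := by
    intro S hS
    simp only [hΦ, dif_pos hS]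
    exact (CLTaux.exists_Phi @hkb hmin' hS).choose_spec.2
  have huniq : ∀ S ∈ M.commutant, ∀ B : K →L[ℂ] K,
      (∀ T ∈ M, B * π T = π T * B) → B ∘L W = W ∘L S → B = Φ S := by
    intro S hS B hBc hBW
    refine CLTaux.ext_gen hmin' ?_
    intro T hT h
    have e1 : B (π T (W h)) = π T (B (W h)) := by
      have hb := hBc T hT
      calc B (π T (W h)) = (B * π T) (W h) := rfl
        _ = (π T * B) (W h) := by rw [hb]
        _ = π T (B (W h)) := rfl
    have e2 : B (W h) = W (S h) := by
      calc B (W h) = (B ∘L W) h := rfl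
        _ = (W ∘L S) h := by rw [hBW]
        _ = W (S h) := rfl
    rw [e1, e2, hgen S hS T hT h]
  have hcomm : ∀ S ∈ M.commutant, ∀ T ∈ M, Φ S * π T = π T * Φ S := by
    intro S hS T hT
    refine CLTaux.ext_gen hmin' ?_
    intro T' hT' h
    have e1 : π T (π T' (W h)) = π (T * T') (W h) := by
      rw [hmin.rep.map_mul T hT T' hT']; rfl
    have e2 : π T (π T' (W (S h))) = π (T * T') (W (S h)) := by
      rw [hmin.rep.map_mul T hT T' hT']; rfl
    calc (Φ S * π T) (π T' (W h)) = Φ S (π (T * T') (W h)) := by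
          rw [ContinuousLinearMap.mul_apply, e1]
      _ = π (T * T') (W (S h)) := hgen S hS _ (mul_mem hT hT') h
      _ = π T (Φ S (π T' (W h))) := by rw [← e2, hgen S hS T' hT' h]
      _ = (π T * Φ S) (π T' (W h)) := rfl
  have hWint : ∀ S ∈ M.commutant, Φ S ∘L W = W ∘L S := by
    intro S hS
    ext h
    have e0 : π (1 : H →L[ℂ] H) (W h) = W h := by rw [hmin.rep.map_one]; rfl
    calc (Φ S ∘L W) h = Φ S (W h) := rfl
      _ = Φ S (π 1 (W h)) := by rw [e0]
      _ = π 1 (W (S h)) := hgen S hS 1 (one_mem M) h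
      _ = W (S h) := by rw [hmin.rep.map_one]; rfl
      _ = (W ∘L S) h := rfl
  refine ⟨Φ, fun S hS => ⟨hcomm S hS, hWint S hS, hnorm S hS, huniq S hS⟩, ?_⟩
  have hsmulmem : ∀ (c : ℂ) (S : H →L[ℂ] H), S ∈ M.commutant → c • S ∈ M.commutant := by
    intro c S hS
    rw [VonNeumannAlgebra.mem_commutant_iff]
    intro g hg
    rw [mul_smul_comm, smul_mul_assoc, VonNeumannAlgebra.mem_commutant_iff.mp hS g hg]
  constructor
  · -- map_add
    intro S hS T hT
    refine CLTaux.ext_gen hmin' ?_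
    intro T' hT' h
    rw [ContinuousLinearMap.add_apply, hgen _ (add_mem hS hT) T' hT' h,
      hgen S hS T' hT' h, hgen T hT T' hT' h,
      show (S + T) h = S h + T h from rfl, map_add, map_add]
  · -- map_smul
    intro c T hT
    refine CLTaux.ext_gen hmin' ?_
    intro T' hT' h
    rw [ContinuousLinearMap.smul_apply, hgen _ (hsmulmem c T hT) T' hT' h,
      hgen T hT T' hT' h, show (c • T) h = c • T h from rfl, map_smul, map_smul]
  · -- map_mul
    intro S hS T hT
    refine CLTaux.ext_gen hmin' ?_
    intro T' hT' h
    rw [ContinuousLinearMap.mul_apply, hgen _ (mul_mem hS hT) T' hT' h,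
      hgen T hT T' hT' h, hgen S hS T' hT' (T h)]
    rfl
  · -- map_star
    intro S hS
    have hstarS : star S ∈ M.commutant := star_mem hS
    rw [ContinuousLinearMap.star_eq_adjoint]
    refine CLTaux.ext_gen hmin' ?_
    intro T hT h
    refine CLTaux.vec_ext hmin' ?_
    intro T' hT' h'
    have hQ : P (star T * T') ∈ M := hP.map_mem _ (mul_mem (star_mem hT) hT')
    have hcommS : S (P (star T * T') h') = P (star T * T') (S h') := by
      have hq := VonNeumannAlgebra.mem_commutant_iff.mp hS _ hQ
      calc S (P (star T * T') h') = (S * P (star T * T')) h' := rfl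
        _ = (P (star T * T') * S) h' := by rw [← hq]
        _ = P (star T * T') (S h') := rfl
    calc (inner ℂ (Φ (star S) (π T (W h))) (π T' (W h')) : ℂ)
        = inner ℂ (π T (W ((star S) h))) (π T' (W h')) := by rw [hgen _ hstarS T hT h]
      _ = inner ℂ ((star S) h) (P (star T * T') h') := CLTaux.L0 hst hT hT' _ _
      _ = inner ℂ h (S (P (star T * T') h')) := by
          rw [ContinuousLinearMap.star_eq_adjoint, ContinuousLinearMap.adjoint_inner_left]
      _ = inner ℂ h (P (star T * T') (S h')) := by rw [hcommS]
      _ = inner ℂ (π T (W h)) (π T' (W (S h'))) := (CLTaux.L0 hst hT hT' _ _).symm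
      _ = inner ℂ (π T (W h)) (Φ S (π T' (W h'))) := by rw [hgen S hS T' hT' h']
      _ = inner ℂ (ContinuousLinearMap.adjoint (Φ S) (π T (W h))) (π T' (W h')) :=
          (ContinuousLinearMap.adjoint_inner_left _ _ _).symm
  · -- map_one
    refine CLTaux.ext_gen hmin' ?_
    intro T hT h
    rw [hgen 1 (one_mem M.commutant) T hT h]
    rfl
  · -- normal
    exact CLTaux.normal_phi hmin' (fun S hS T hT h => hgen S hS T hT h) hnorm
end
end

section
/- Let M be a von Neumann algebra acting on a separable complex Hilbert space H and let {P_t}_{t≥0} be a cp-semigroup on M that is weakly continuous. Then {P_t} is jointly continuous in the weak operator topology along sequences: if {X_n} is a sequence in M converging to X ∈ M in the weak operator topology and {t_n} is a sequence in [0,∞) converging to t, then P_{t_n}(X_n) converges to P_t(X) in the weak operator topology. -/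
open scoped ComplexOrder
open ContinuousLinearMap

noncomputable section

local notation "⟪" x ", " y "⟫" => @inner ℂ _ _ x y

section Aux

variable {H : Type*} [NormedAddCommGroup H] [InnerProductSpace ℂ H] [CompleteSpace H]
  {M : VonNeumannAlgebra H} {Q : (H →L[ℂ] H) → (H →L[ℂ] H)}

lemma aux_smul_mem (c : ℂ) {T : H →L[ℂ] H} (hT : T ∈ M) : c • T ∈ M := by
  have h1 : algebraMap ℂ (H →L[ℂ] H) c ∈ M.toStarSubalgebra := M.toStarSubalgebra.algebraMap_mem c
  have := mul_mem (VonNeumannAlgebra.mem_carrier.mp h1) hT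
  rwa [Algebra.algebraMap_eq_smul_one, smul_mul_assoc, one_mul] at this

lemma aux_map_zero (hQ : IsUNCPMapOn M Q) : Q 0 = 0 := by
  have h := hQ.map_add 0 (zero_mem M) 0 (zero_mem M)
  rw [add_zero] at h
  exact left_eq_add.mp h

lemma aux_pos (hQ : IsUNCPMapOn M Q) {T : H →L[ℂ] H} (hT : T ∈ M)
    (hpos : ∀ x : H, 0 ≤ ⟪x, T x⟫) : ∀ x : H, 0 ≤ ⟪x, Q T x⟫ := by
  intro x
  have h := hQ.cp 1 (fun _ _ => T) (fun _ _ => hT) ?_ (fun _ => x)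
  · simpa [Fin.sum_univ_one] using h
  · intro k
    simpa [Fin.sum_univ_one] using hpos (k 0)

lemma aux_sa_of_inner_real {W : H →L[ℂ] H}
    (h : ∀ x : H, (starRingEnd ℂ) ⟪x, W x⟫ = ⟪x, W x⟫) : star W = W := by
  have key : ∀ x : H, ⟪(W - star W) x, x⟫ = 0 := by
    intro x
    have h1 : ⟪(star W) x, x⟫ = ⟪x, W x⟫ := by
      rw [ContinuousLinearMap.star_eq_adjoint, ContinuousLinearMap.adjoint_inner_left]
    have h2 : ⟪W x, x⟫ = (starRingEnd ℂ) ⟪x, W x⟫ := by rw [← inner_conj_symm]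
    simp [ContinuousLinearMap.sub_apply, inner_sub_left, h1, h2, h x]
  have h0 : ((W - star W : H →L[ℂ] H) : H →ₗ[ℂ] H) = 0 := by
    rw [← inner_map_self_eq_zero]
    intro x; exact key x
  have : (W - star W : H →L[ℂ] H) = 0 := by
    ext x
    have := congrArg (fun (f : H →ₗ[ℂ] H) => f x) h0
    simpa using this
  have := sub_eq_zero.mp this
  rw [← this]

open Filter in
lemma aux_tendsto_toWOT_iff {α : Type*} {l : Filter α} {f : α → (H →L[ℂ] H)} {A : H →L[ℂ] H} :
    Tendsto (fun a => (ContinuousLinearMapWOT.linearEquiv (σ := RingHom.id ℂ) (E := H) (F := H) ℂ).symm (f a)) l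
      (nhds ((ContinuousLinearMapWOT.linearEquiv (σ := RingHom.id ℂ) (E := H) (F := H) ℂ).symm A)) ↔
    ∀ x k : H, Tendsto (fun a => ⟪f a x, k⟫) l (nhds ⟪A x, k⟫) := by
  rw [ContinuousLinearMapWOT.tendsto_iff_forall_dual_apply_tendsto]
  constructor
  · intro h x k
    have h1 := h x (InnerProductSpace.toDual ℂ H k)
    simp only [InnerProductSpace.toDual_apply_apply] at h1
    have h2 := h1.star
    simp only [RCLike.star_def, inner_conj_symm] at h2; exact h2
  · intro h x y
    obtain ⟨k, rfl⟩ := (InnerProductSpace.toDual ℂ H).surjective y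
    have h2 := (h x k).star
    simp only [RCLike.star_def, inner_conj_symm] at h2
    simp only [InnerProductSpace.toDual_apply_apply]; exact h2

lemma aux_sa (hQ : IsUNCPMapOn M Q) {T : H →L[ℂ] H} (hT : T ∈ M)
    (hsa : star T = T) : star (Q T) = Q T := by
  set c : ℝ := ‖T‖ with hc
  have hone : (1 : H →L[ℂ] H) ∈ M := one_mem M
  have hcI : (c : ℂ) • (1 : H →L[ℂ] H) ∈ M := aux_smul_mem _ hone
  have hTc : T + (c : ℂ) • 1 ∈ M := add_mem hT hcI
  -- T + c•1 has nonneg inner products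
  have hpos : ∀ x : H, 0 ≤ ⟪x, (T + (c : ℂ) • 1) x⟫ := by
    intro x
    have hre : ⟪x, T x⟫ = ((⟪x, T x⟫.re : ℝ) : ℂ) := by
      have : (starRingEnd ℂ) ⟪x, T x⟫ = ⟪x, T x⟫ := by
        rw [inner_conj_symm]
        nth_rewrite 2 [← hsa]
        rw [ContinuousLinearMap.star_eq_adjoint, ContinuousLinearMap.adjoint_inner_right]
      exact (Complex.conj_eq_iff_re.mp this).symm
    have happ : (T + (c : ℂ) • 1) x = T x + (c : ℂ) • x := by
      simp [ContinuousLinearMap.add_apply]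
    rw [happ, inner_add_right, inner_smul_right, hre]
    have h1 : |⟪x, T x⟫.re| ≤ c * ‖x‖ ^ 2 := by
      calc |⟪x, T x⟫.re| ≤ ‖⟪x, T x⟫‖ := Complex.abs_re_le_norm _
        _ ≤ ‖x‖ * ‖T x‖ := norm_inner_le_norm _ _
        _ ≤ ‖x‖ * (c * ‖x‖) := by
            gcongr; exact T.le_opNorm x
        _ = c * ‖x‖ ^ 2 := by ring
    have h2 : ⟪x, x⟫ = ((‖x‖ ^ 2 : ℝ) : ℂ) := by
      rw [inner_self_eq_norm_sq_to_K]; norm_num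
    rw [h2]
    have : ((⟪x, T x⟫.re : ℝ) : ℂ) + (c : ℂ) * ((‖x‖ ^ 2 : ℝ) : ℂ)
        = (((⟪x, T x⟫.re + c * ‖x‖ ^ 2 : ℝ)) : ℂ) := by push_cast; ring
    rw [this]
    rw [Complex.zero_le_real]
    have := abs_le.mp h1
    linarith [this.1]
  have hpos' := aux_pos hQ hTc hpos
  have hsa1 : star (Q (T + (c : ℂ) • 1)) = Q (T + (c : ℂ) • 1) := by
    apply aux_sa_of_inner_real
    intro x
    have h0 := hpos' x
    rw [Complex.le_def] at h0
    rw [Complex.conj_eq_iff_im]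
    exact h0.2.symm
  have hQadd : Q (T + (c : ℂ) • 1) = Q T + (c : ℂ) • 1 := by
    rw [hQ.map_add T hT _ hcI, hQ.map_smul _ _ hone, hQ.map_one]
  rw [hQadd] at hsa1
  have : star (Q T) + star ((c : ℂ) • (1 : H →L[ℂ] H)) = Q T + (c : ℂ) • 1 := by
    rw [← star_add]; exact hsa1
  have hstar1 : star ((c : ℂ) • (1 : H →L[ℂ] H)) = (c : ℂ) • 1 := by
    rw [star_smul, star_one, Complex.star_def, Complex.conj_ofReal]
  rw [hstar1] at this
  exact add_right_cancel this

lemma aux_star (hQ : IsUNCPMapOn M Q) {T : H →L[ℂ] H} (hT : T ∈ M) :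
    Q (star T) = star (Q T) := by
  set A : H →L[ℂ] H := (2⁻¹ : ℂ) • (T + star T) with hA
  set B : H →L[ℂ] H := (-(Complex.I / 2)) • (T - star T) with hB
  have hTM' : star T ∈ M := star_mem hT
  have hAM : A ∈ M := aux_smul_mem _ (add_mem hT hTM')
  have hBM : B ∈ M := aux_smul_mem _ (sub_mem hT hTM')
  have hAsa : star A = A := by
    rw [hA, star_smul, star_add, star_star, add_comm (star T) T]
    congr 1
    simp [Complex.star_def]
  have hBsa : star B = B := by
    rw [hB, star_smul, star_sub, star_star]
    rw [show star (-(Complex.I / 2)) = Complex.I / 2 by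
      simp [Complex.star_def, Complex.conj_I, div_eq_mul_inv]]
    rw [show (star T - T : H →L[ℂ] H) = -(T - star T) by rw [neg_sub]]
    rw [smul_neg, ← neg_smul]
  have hTAB : T = A + Complex.I • B := by
    rw [hA, hB, smul_smul]
    have : Complex.I * -(Complex.I / 2) = (2⁻¹ : ℂ) := by
      rw [div_eq_mul_inv, mul_neg, ← mul_assoc, Complex.I_mul_I]; norm_num
    rw [this, ← smul_add]
    rw [show (T + star T) + (T - star T) = (2 : ℂ) • T by
      rw [two_smul]; abel]
    rw [smul_smul]; norm_num
  have hTstar : star T = A - Complex.I • B := by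
    rw [hTAB, star_add, hAsa, star_smul, hBsa, Complex.star_def, Complex.conj_I, neg_smul,
      ← sub_eq_add_neg]
  have hIB : (Complex.I • B : H →L[ℂ] H) ∈ M := aux_smul_mem _ hBM
  have hnIB : ((-Complex.I) • B : H →L[ℂ] H) ∈ M := aux_smul_mem _ hBM
  have hQA : star (Q A) = Q A := aux_sa hQ hAM hAsa
  have hQB : star (Q B) = Q B := aux_sa hQ hBM hBsa
  calc Q (star T) = Q (A + (-Complex.I) • B) := by
        rw [hTstar, neg_smul, ← sub_eq_add_neg]
    _ = Q A + (-Complex.I) • Q B := by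
        rw [hQ.map_add A hAM _ hnIB, hQ.map_smul _ _ hBM]
    _ = star (Q A + Complex.I • Q B) := by
        rw [star_add, hQA, star_smul, hQB, Complex.star_def, Complex.conj_I]
    _ = star (Q T) := by
        rw [hTAB, hQ.map_add A hAM _ hIB, hQ.map_smul _ _ hBM]

lemma aux_contract (hQ : IsUNCPMapOn M Q) {T : H →L[ℂ] H} (hT : T ∈ M) :
    ‖Q T‖ ≤ ‖T‖ := by
  rcases eq_or_lt_of_le (norm_nonneg T) with h0 | hrpos
  · have hT0 : T = 0 := by rwa [eq_comm, norm_eq_zero] at h0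
    simp [hT0, aux_map_zero hQ]
  set r : ℝ := ‖T‖ with hr
  set a : Fin 2 → Fin 2 → (H →L[ℂ] H) :=
    ![![(r : ℂ) • 1, T], ![star T, (r : ℂ) • 1]] with ha
  have hmem : ∀ i j, a i j ∈ M := by
    intro i j
    fin_cases i <;> fin_cases j <;>
      simp only [ha, Matrix.cons_val_zero, Matrix.cons_val_one, Matrix.head_cons] <;>
      first
        | exact aux_smul_mem _ (one_mem M)
        | exact hT
        | exact star_mem hT
  have key : ∀ (W : H →L[ℂ] H) (k₀ k₁ : H),
      ⟪k₀, ((r : ℂ) • (1 : H →L[ℂ] H)) k₀⟫ + ⟪k₀, W k₁⟫ + (⟪k₁, (star W) k₀⟫ +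
        ⟪k₁, ((r : ℂ) • (1 : H →L[ℂ] H)) k₁⟫)
      = (((r * (‖k₀‖ ^ 2 + ‖k₁‖ ^ 2) + 2 * ⟪k₀, W k₁⟫.re : ℝ)) : ℂ) := by
    intro W k₀ k₁
    have h1 : ∀ v : H, ⟪v, ((r : ℂ) • (1 : H →L[ℂ] H)) v⟫ = ((r * ‖v‖ ^ 2 : ℝ) : ℂ) := by
      intro v
      rw [ContinuousLinearMap.smul_apply, ContinuousLinearMap.one_apply, inner_smul_right,
        inner_self_eq_norm_sq_to_K]
      push_cast
      rfl
    have h2 : ⟪k₁, (star W) k₀⟫ = (starRingEnd ℂ) ⟪k₀, W k₁⟫ := by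
      rw [ContinuousLinearMap.star_eq_adjoint, ContinuousLinearMap.adjoint_inner_right,
        ← inner_conj_symm]
    rw [h1 k₀, h1 k₁, h2]
    have hz := Complex.add_conj (⟪k₀, W k₁⟫)
    push_cast at hz ⊢
    linear_combination hz
  have hposa : PosOpMatrix a := by
    intro k
    simp only [Fin.sum_univ_two]
    have e00 : a 0 0 = (r : ℂ) • 1 := rfl
    have e01 : a 0 1 = T := rfl
    have e10 : a 1 0 = star T := rfl
    have e11 : a 1 1 = (r : ℂ) • 1 := rfl
    rw [e00, e01, e10, e11]
    rw [key T (k 0) (k 1)]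
    rw [Complex.zero_le_real]
    have hb : |⟪k 0, T (k 1)⟫.re| ≤ r * (‖k 0‖ * ‖k 1‖) := by
      calc |⟪k 0, T (k 1)⟫.re| ≤ ‖⟪k 0, T (k 1)⟫‖ := Complex.abs_re_le_norm _
        _ ≤ ‖k 0‖ * ‖T (k 1)‖ := norm_inner_le_norm _ _
        _ ≤ ‖k 0‖ * (r * ‖k 1‖) := by gcongr; exact T.le_opNorm _
        _ = r * (‖k 0‖ * ‖k 1‖) := by ring
    nlinarith [sq_nonneg (‖k 0‖ - ‖k 1‖), abs_le.mp hb, norm_nonneg (k 0), norm_nonneg (k 1),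
      le_of_lt hrpos]
  have hcp := hQ.cp 2 a hmem hposa
  have hQa : ∀ k₀ k₁ : H,
      0 ≤ r * (‖k₀‖ ^ 2 + ‖k₁‖ ^ 2) + 2 * ⟪k₀, (Q T) k₁⟫.re := by
    intro k₀ k₁
    have h := hcp ![k₀, k₁]
    simp only [Fin.sum_univ_two] at h
    have e00 : a 0 0 = (r : ℂ) • 1 := rfl
    have e01 : a 0 1 = T := rfl
    have e10 : a 1 0 = star T := rfl
    have e11 : a 1 1 = (r : ℂ) • 1 := rfl
    rw [e00, e01, e10, e11] at h
    have hq1 : Q ((r : ℂ) • (1 : H →L[ℂ] H)) = (r : ℂ) • 1 := by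
      rw [hQ.map_smul _ _ (one_mem M), hQ.map_one]
    have hq2 : Q (star T) = star (Q T) := aux_star hQ hT
    rw [hq1, hq2] at h
    have hk0 : (![k₀, k₁] : Fin 2 → H) 0 = k₀ := rfl
    have hk1 : (![k₀, k₁] : Fin 2 → H) 1 = k₁ := rfl
    rw [hk0, hk1] at h
    rw [key (Q T) k₀ k₁] at h
    rwa [Complex.zero_le_real] at h
  refine ContinuousLinearMap.opNorm_le_bound _ (le_of_lt hrpos) ?_
  intro k₁
  set v : H := (Q T) k₁ with hv
  have hvv : ⟪v, v⟫ = ((‖v‖ ^ 2 : ℝ) : ℂ) := by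
    rw [inner_self_eq_norm_sq_to_K]; push_cast; rfl
  have hs := hQa ((((-(1 / r) : ℝ)) : ℂ) • v) k₁
  have hinner : ⟪((((-(1 / r) : ℝ)) : ℂ) • v), (Q T) k₁⟫ = ((-(1 / r) * ‖v‖ ^ 2 : ℝ) : ℂ) := by
    rw [inner_smul_left, ← hv, hvv, Complex.conj_ofReal, ← Complex.ofReal_mul]
  have hnorm : ‖((((-(1 / r) : ℝ)) : ℂ) • v)‖ = 1 / r * ‖v‖ := by
    rw [norm_smul, Complex.norm_real, Real.norm_eq_abs, abs_neg,
      abs_of_pos (by positivity : (0:ℝ) < 1 / r)]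
  rw [hinner, hnorm] at hs
  rw [Complex.ofReal_re] at hs
  have expand : r * ((1 / r * ‖v‖) ^ 2 + ‖k₁‖ ^ 2) + 2 * (-(1 / r) * ‖v‖ ^ 2)
      = r * ‖k₁‖ ^ 2 - ‖v‖ ^ 2 / r := by field_simp; ring
  rw [expand] at hs
  have hsq : ‖v‖ ^ 2 ≤ (r * ‖k₁‖) ^ 2 := by
    have h1 : ‖v‖ ^ 2 / r ≤ r * ‖k₁‖ ^ 2 := by linarith
    have h2 : ‖v‖ ^ 2 ≤ r * ‖k₁‖ ^ 2 * r := by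
      rw [div_le_iff₀ hrpos] at h1; exact h1
    calc ‖v‖ ^ 2 ≤ r * ‖k₁‖ ^ 2 * r := h2
      _ = (r * ‖k₁‖) ^ 2 := by ring
  calc ‖v‖ = Real.sqrt (‖v‖ ^ 2) := (Real.sqrt_sq (norm_nonneg v)).symm
    _ ≤ Real.sqrt ((r * ‖k₁‖) ^ 2) := Real.sqrt_le_sqrt hsq
    _ = r * ‖k₁‖ := Real.sqrt_sq (by positivity)

open Filter in
lemma aux_normal_seq (hQ : IsUNCPMapOn M Q) {r : ℝ}
    {T : ℕ → (H →L[ℂ] H)} {Tl : H →L[ℂ] H}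
    (hTM : ∀ m, T m ∈ M) (hTr : ∀ m, ‖T m‖ ≤ r)
    (hTlM : Tl ∈ M) (hTlr : ‖Tl‖ ≤ r)
    (hconv : ∀ x k : H, Tendsto (fun m => ⟪T m x, k⟫) atTop (nhds ⟪Tl x, k⟫)) :
    ∀ x k : H, Tendsto (fun m => ⟪Q (T m) x, k⟫) atTop (nhds ⟪Q Tl x, k⟫) := by
  have hcont := hQ.normal r
  set s : Set (H →L[ℂ] H) := (M : Set (H →L[ℂ] H)) ∩ Metric.closedBall 0 r with hs
  have hTls : Tl ∈ s := ⟨hTlM, by rwa [Metric.mem_closedBall, dist_zero_right]⟩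
  have hTlimg : (ContinuousLinearMapWOT.linearEquiv (σ := RingHom.id ℂ) (E := H) (F := H) ℂ).symm Tl ∈ (ContinuousLinearMapWOT.linearEquiv (σ := RingHom.id ℂ) (E := H) (F := H) ℂ).symm '' s :=
    ⟨Tl, hTls, rfl⟩
  have hcwa := hcont ((ContinuousLinearMapWOT.linearEquiv (σ := RingHom.id ℂ) (E := H) (F := H) ℂ).symm Tl) hTlimg
  have htendimg : Tendsto (fun m => (ContinuousLinearMapWOT.linearEquiv (σ := RingHom.id ℂ) (E := H) (F := H) ℂ).symm (T m)) atTop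
      (nhdsWithin ((ContinuousLinearMapWOT.linearEquiv (σ := RingHom.id ℂ) (E := H) (F := H) ℂ).symm Tl)
        ((ContinuousLinearMapWOT.linearEquiv (σ := RingHom.id ℂ) (E := H) (F := H) ℂ).symm '' s)) := by
    rw [tendsto_nhdsWithin_iff]
    constructor
    · exact aux_tendsto_toWOT_iff.mpr hconv
    · exact Eventually.of_forall fun m =>
        ⟨T m, ⟨hTM m, by rw [Metric.mem_closedBall, dist_zero_right]; exact hTr m⟩, rfl⟩
  have hfinal := hcwa.tendsto.comp htendimg
  have heq : ∀ m, (ContinuousLinearMapWOT.linearEquiv (σ := RingHom.id ℂ) (E := H) (F := H) ℂ).symm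
      (Q (((ContinuousLinearMapWOT.linearEquiv (σ := RingHom.id ℂ) (E := H) (F := H) ℂ).symm).symm ((ContinuousLinearMapWOT.linearEquiv (σ := RingHom.id ℂ) (E := H) (F := H) ℂ).symm (T m))))
      = (ContinuousLinearMapWOT.linearEquiv (σ := RingHom.id ℂ) (E := H) (F := H) ℂ).symm (Q (T m)) := by
    intro m; rw [LinearEquiv.symm_apply_apply]
  have heql : (ContinuousLinearMapWOT.linearEquiv (σ := RingHom.id ℂ) (E := H) (F := H) ℂ).symm
      (Q (((ContinuousLinearMapWOT.linearEquiv (σ := RingHom.id ℂ) (E := H) (F := H) ℂ).symm).symm ((ContinuousLinearMapWOT.linearEquiv (σ := RingHom.id ℂ) (E := H) (F := H) ℂ).symm Tl)))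
      = (ContinuousLinearMapWOT.linearEquiv (σ := RingHom.id ℂ) (E := H) (F := H) ℂ).symm (Q Tl) := by
    rw [LinearEquiv.symm_apply_apply]
  rw [show (fun A => (ContinuousLinearMapWOT.linearEquiv (σ := RingHom.id ℂ) (E := H) (F := H) ℂ).symm
      (Q (((ContinuousLinearMapWOT.linearEquiv (σ := RingHom.id ℂ) (E := H) (F := H) ℂ).symm).symm A))) ∘
      (fun m => (ContinuousLinearMapWOT.linearEquiv (σ := RingHom.id ℂ) (E := H) (F := H) ℂ).symm (T m))
      = fun m => (ContinuousLinearMapWOT.linearEquiv (σ := RingHom.id ℂ) (E := H) (F := H) ℂ).symm (Q (T m)) from funext heq] at hfinal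
  rw [heql] at hfinal
  exact aux_tendsto_toWOT_iff.mp hfinal

open Filter in
lemma aux_bounded {T : ℕ → (H →L[ℂ] H)} {Tl : H →L[ℂ] H}
    (hconv : ∀ x k : H, Tendsto (fun m => ⟪T m x, k⟫) atTop (nhds ⟪Tl x, k⟫)) :
    ∃ r : ℝ, 0 ≤ r ∧ (∀ m, ‖T m‖ ≤ r) ∧ ‖Tl‖ ≤ r := by
  have hpt : ∀ x : H, ∃ C : ℝ, ∀ m, ‖T m x‖ ≤ C := by
    intro x
    have hBS := banach_steinhaus (g := fun m => InnerProductSpace.toDual ℂ H (T m x)) ?_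
    · obtain ⟨C, hC⟩ := hBS
      exact ⟨C, fun m => by
        have := hC m
        rwa [LinearIsometryEquiv.norm_map] at this⟩
    · intro k
      have hconv' := (hconv x k).norm
      have hbdd := hconv'.bddAbove_range
      obtain ⟨C, hC⟩ := hbdd
      refine ⟨C, fun m => ?_⟩
      have : ‖⟪T m x, k⟫‖ ≤ C := hC ⟨m, rfl⟩
      calc ‖(InnerProductSpace.toDual ℂ H (T m x)) k‖ = ‖⟪T m x, k⟫‖ := by
            rw [InnerProductSpace.toDual_apply_apply]
        _ ≤ C := this
  obtain ⟨C, hC⟩ := banach_steinhaus (g := T) hpt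
  refine ⟨max C ‖Tl‖, le_trans (norm_nonneg Tl) (le_max_right _ _),
    fun m => le_trans (hC m) (le_max_left _ _), le_max_right _ _⟩

open Filter in
lemma aux_cluster [TopologicalSpace.SeparableSpace H] {r : ℝ} (hr : 0 ≤ r)
    {T : ℕ → (H →L[ℂ] H)} (hTM : ∀ m, T m ∈ M) (hTr : ∀ m, ‖T m‖ ≤ r) :
    ∃ Z : H →L[ℂ] H, Z ∈ M ∧ ‖Z‖ ≤ r ∧ ∃ φ : ℕ → ℕ, StrictMono φ ∧
      ∀ x k : H, Tendsto (fun m => ⟪T (φ m) x, k⟫) atTop (nhds ⟪Z x, k⟫) := by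
  have hne : Nonempty H := ⟨0⟩
  obtain ⟨e, he⟩ := TopologicalSpace.exists_dense_seq H
  have hop : ∀ (m : ℕ) (v : H), ‖T m v‖ ≤ r * ‖v‖ := by
    intro m v
    calc ‖T m v‖ ≤ ‖T m‖ * ‖v‖ := (T m).le_opNorm v
      _ ≤ r * ‖v‖ := by gcongr; exact hTr m
  have hbound : ∀ (m : ℕ) (x k : H), ‖⟪T m x, k⟫‖ ≤ r * ‖x‖ * ‖k‖ := by
    intro m x k
    calc ‖⟪T m x, k⟫‖ ≤ ‖T m x‖ * ‖k‖ := norm_inner_le_norm _ _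
      _ ≤ (r * ‖x‖) * ‖k‖ := by gcongr; exact hop m x
      _ = r * ‖x‖ * ‖k‖ := by ring
  set u : ℕ → (ℕ × ℕ → ℂ) := fun m p => ⟪T m (e p.1), e p.2⟫ with hu
  set S : Set (ℕ × ℕ → ℂ) :=
    Set.univ.pi (fun p => Metric.closedBall (0:ℂ) (r * ‖e p.1‖ * ‖e p.2‖)) with hS
  have hScomp : IsCompact S := isCompact_univ_pi fun p => isCompact_closedBall _ _
  have huS : ∀ m, u m ∈ S := by
    intro m
    rw [hS, Set.mem_univ_pi]
    intro p
    rw [Metric.mem_closedBall, dist_zero_right]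
    exact hbound m _ _
  obtain ⟨f, -, φ, hφ, hlim⟩ := hScomp.tendsto_subseq huS
  have hcoord : ∀ p : ℕ × ℕ, Tendsto (fun m => u (φ m) p) atTop (nhds (f p)) := by
    rw [tendsto_pi_nhds] at hlim
    exact hlim
  have approx : ∀ (W : H →L[ℂ] H), ‖W‖ ≤ r → ∀ (x k xi kj : H),
      ‖⟪W x, k⟫ - ⟪W xi, kj⟫‖ ≤ r * (‖x - xi‖ * ‖k‖ + ‖xi‖ * ‖k - kj‖) := by
    intro W hW x k xi kj
    have hWb : ∀ v : H, ‖W v‖ ≤ r * ‖v‖ := by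
      intro v
      calc ‖W v‖ ≤ ‖W‖ * ‖v‖ := W.le_opNorm v
        _ ≤ r * ‖v‖ := by gcongr
    have hsplit : ⟪W x, k⟫ - ⟪W xi, kj⟫ = ⟪W (x - xi), k⟫ + ⟪W xi, k - kj⟫ := by
      rw [map_sub, inner_sub_left, inner_sub_right]; ring
    rw [hsplit]
    calc ‖⟪W (x - xi), k⟫ + ⟪W xi, k - kj⟫‖
        ≤ ‖⟪W (x - xi), k⟫‖ + ‖⟪W xi, k - kj⟫‖ := norm_add_le _ _
      _ ≤ ‖W (x - xi)‖ * ‖k‖ + ‖W xi‖ * ‖k - kj‖ :=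
          add_le_add (norm_inner_le_norm _ _) (norm_inner_le_norm _ _)
      _ ≤ (r * ‖x - xi‖) * ‖k‖ + (r * ‖xi‖) * ‖k - kj‖ := by
          gcongr
          · exact hWb _
          · exact hWb _
      _ = r * (‖x - xi‖ * ‖k‖ + ‖xi‖ * ‖k - kj‖) := by ring
  have key : ∀ x k : H, CauchySeq (fun m => ⟪T (φ m) x, k⟫) := by
    intro x k
    rw [Metric.cauchySeq_iff]
    intro ε hε
    set D : ℝ := (r + 1) * (‖x‖ + ‖k‖ + 2) + 1 with hD
    have hDpos : 0 < D := by positivity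
    set δ : ℝ := min 1 (ε / (3 * D)) with hδ
    have hδpos : 0 < δ := lt_min one_pos (by positivity)
    have hδ1 : δ ≤ 1 := min_le_left _ _
    have hδ2 : δ ≤ ε / (3 * D) := min_le_right _ _
    obtain ⟨i, hi⟩ := Metric.denseRange_iff.mp he x δ hδpos
    obtain ⟨j, hj⟩ := Metric.denseRange_iff.mp he k δ hδpos
    have hxe : ‖x - e i‖ ≤ δ := by
      rw [← dist_eq_norm]; exact hi.le
    have hke : ‖k - e j‖ ≤ δ := by
      rw [← dist_eq_norm]; exact hj.le
    have hnei : ‖e i‖ ≤ ‖x‖ + 1 := by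
      have h3 := norm_sub_norm_le (e i) x
      have h4 : ‖e i - x‖ ≤ δ := by rwa [norm_sub_rev]
      linarith
    have h4 : δ * D ≤ ε / 3 := by
      have h5 := mul_le_mul_of_nonneg_right hδ2 hDpos.le
      have h6 : ε / (3 * D) * D = ε / 3 := by field_simp
      linarith
    have happrox : ∀ m : ℕ, ‖⟪T (φ m) x, k⟫ - ⟪T (φ m) (e i), e j⟫‖ ≤ ε / 3 := by
      intro m
      have h1 := approx (T (φ m)) (hTr (φ m)) x k (e i) (e j)
      have hA : ‖x - e i‖ * ‖k‖ ≤ δ * ‖k‖ := mul_le_mul_of_nonneg_right hxe (norm_nonneg k)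
      have hB : ‖e i‖ * ‖k - e j‖ ≤ (‖x‖ + 1) * δ :=
        mul_le_mul hnei hke (norm_nonneg _) (by positivity)
      have hC : r * (‖x - e i‖ * ‖k‖ + ‖e i‖ * ‖k - e j‖) ≤ r * (δ * ‖k‖ + (‖x‖ + 1) * δ) :=
        mul_le_mul_of_nonneg_left (add_le_add hA hB) hr
      have hD2 : r * (δ * ‖k‖ + (‖x‖ + 1) * δ) ≤ δ * D := by
        rw [hD]
        nlinarith [norm_nonneg x, norm_nonneg k, hδpos.le, hr,
          mul_nonneg hδpos.le hr, mul_nonneg hδpos.le (norm_nonneg x),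
          mul_nonneg hδpos.le (norm_nonneg k)]
      exact h1.trans (hC.trans (hD2.trans h4))
    have hmid : ∃ N, ∀ m ≥ N, ∀ n ≥ N,
        dist (u (φ m) (i, j)) (u (φ n) (i, j)) < ε / 3 := by
      have := (hcoord (i, j)).cauchySeq
      rw [Metric.cauchySeq_iff] at this
      exact this (ε / 3) (by positivity)
    obtain ⟨N, hN⟩ := hmid
    refine ⟨N, fun m hm n hn => ?_⟩
    have htri := dist_triangle4 (⟪T (φ m) x, k⟫) (u (φ m) (i, j)) (u (φ n) (i, j)) (⟪T (φ n) x, k⟫)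
    have e1 : dist (⟪T (φ m) x, k⟫) (u (φ m) (i, j)) ≤ ε / 3 := by
      rw [dist_eq_norm]; exact happrox m
    have e2 : dist (u (φ n) (i, j)) (⟪T (φ n) x, k⟫) ≤ ε / 3 := by
      rw [dist_comm, dist_eq_norm]; exact happrox n
    have e3 := hN m hm n hn
    calc dist (⟪T (φ m) x, k⟫) (⟪T (φ n) x, k⟫) ≤ _ := htri
      _ < ε := by linarith
  -- limits exist
  have hex : ∀ x k : H, ∃ L : ℂ, Tendsto (fun m => ⟪T (φ m) x, k⟫) atTop (nhds L) :=
    fun x k => cauchySeq_tendsto_of_complete (key x k)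
  choose B hB using hex
  have hBnorm : ∀ x k, ‖B x k‖ ≤ r * ‖x‖ * ‖k‖ := by
    intro x k
    refine le_of_tendsto (hB x k).norm (Eventually.of_forall fun m => hbound _ _ _)
  have hBaddk : ∀ x k k', B x (k + k') = B x k + B x k' := by
    intro x k k'
    refine tendsto_nhds_unique (hB x (k + k')) ?_
    have : (fun m => ⟪T (φ m) x, k + k'⟫) = fun m => ⟪T (φ m) x, k⟫ + ⟪T (φ m) x, k'⟫ := by
      funext m; rw [inner_add_right]
    rw [this]
    exact (hB x k).add (hB x k')
  have hBsmulk : ∀ x (c : ℂ) k, B x (c • k) = c * B x k := by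
    intro x c k
    refine tendsto_nhds_unique (hB x (c • k)) ?_
    have : (fun m => ⟪T (φ m) x, c • k⟫) = fun m => c * ⟪T (φ m) x, k⟫ := by
      funext m; rw [inner_smul_right]
    rw [this]
    exact (hB x k).const_mul c
  -- realize as vectors
  have hvec : ∀ x : H, ∃ z : H, ∀ k, ⟪z, k⟫ = B x k := by
    intro x
    set glin : H →ₗ[ℂ] ℂ :=
      { toFun := fun k => B x k
        map_add' := fun k k' => hBaddk x k k'
        map_smul' := fun c k => by simpa using hBsmulk x c k } with hglin
    have hgb : ∀ k, ‖glin k‖ ≤ (r * ‖x‖) * ‖k‖ := by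
      intro k
      have := hBnorm x k
      simpa [hglin, mul_assoc] using this
    set g : H →L[ℂ] ℂ := glin.mkContinuous (r * ‖x‖) hgb with hg
    refine ⟨(InnerProductSpace.toDual ℂ H).symm g, fun k => ?_⟩
    rw [InnerProductSpace.toDual_symm_apply]
    rfl
  choose Z0 hZ0 using hvec
  have hZlim : ∀ x k, Tendsto (fun m => ⟪T (φ m) x, k⟫) atTop (nhds ⟪Z0 x, k⟫) := by
    intro x k
    rw [hZ0 x k]
    exact hB x k
  have hZadd : ∀ x y, Z0 (x + y) = Z0 x + Z0 y := by
    intro x y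
    refine ext_inner_right ℂ fun k => ?_
    rw [hZ0, inner_add_left, hZ0, hZ0]
    refine tendsto_nhds_unique ?_ ((hB x k).add (hB y k))
    have : (fun m => ⟪T (φ m) (x + y), k⟫) = fun m => ⟪T (φ m) x, k⟫ + ⟪T (φ m) y, k⟫ := by
      funext m; rw [map_add, inner_add_left]
    rw [← this]
    exact hB (x + y) k
  have hZsmul : ∀ (c : ℂ) x, Z0 (c • x) = c • Z0 x := by
    intro c x
    refine ext_inner_right ℂ fun k => ?_
    rw [hZ0, inner_smul_left]
    rw [hZ0]
    refine tendsto_nhds_unique ?_ ((hB x k).const_mul _)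
    have : (fun m => ⟪T (φ m) (c • x), k⟫) = fun m => (starRingEnd ℂ) c * ⟪T (φ m) x, k⟫ := by
      funext m; rw [map_smul, inner_smul_left]
    rw [← this]
    exact hB (c • x) k
  have hZnorm : ∀ x, ‖Z0 x‖ ≤ r * ‖x‖ := by
    intro x
    rcases eq_or_ne (Z0 x) 0 with h | h
    · rw [h, norm_zero]; positivity
    · have hzz : ⟪Z0 x, Z0 x⟫ = ((‖Z0 x‖ ^ 2 : ℝ) : ℂ) := by
        rw [inner_self_eq_norm_sq_to_K]; push_cast; rfl
      have h1 : ‖Z0 x‖ ^ 2 = ‖B x (Z0 x)‖ := by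
        rw [← hZ0, hzz]
        rw [Complex.norm_real, Real.norm_of_nonneg (by positivity : (0:ℝ) ≤ ‖Z0 x‖ ^ 2)]
      have h2 : ‖B x (Z0 x)‖ ≤ r * ‖x‖ * ‖Z0 x‖ := hBnorm x (Z0 x)
      have h3 : ‖Z0 x‖ * ‖Z0 x‖ ≤ (r * ‖x‖) * ‖Z0 x‖ := by
        rw [← pow_two]
        rw [h1]
        calc ‖B x (Z0 x)‖ ≤ r * ‖x‖ * ‖Z0 x‖ := h2
          _ = (r * ‖x‖) * ‖Z0 x‖ := by ring
      exact le_of_mul_le_mul_right h3 (norm_pos_iff.mpr h)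
  set Zlin : H →ₗ[ℂ] H :=
    { toFun := Z0
      map_add' := hZadd
      map_smul' := fun c x => by simpa using hZsmul c x } with hZlin
  set Z : H →L[ℂ] H := Zlin.mkContinuous r (fun x => by simpa [hZlin] using hZnorm x) with hZ
  have hZapp : ∀ x, Z x = Z0 x := fun x => rfl
  have hZMlim : ∀ x k, Tendsto (fun m => ⟪T (φ m) x, k⟫) atTop (nhds ⟪Z x, k⟫) := by
    intro x k; rw [hZapp]; exact hZlim x k
  have hZM : Z ∈ M := by
    have hcc := M.centralizer_centralizer
    rw [← SetLike.mem_coe, ← hcc]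
    rw [Set.mem_centralizer_iff]
    intro s hs
    ext x
    refine ext_inner_right ℂ fun k => ?_
    have hcomm : ∀ m, s * T (φ m) = T (φ m) * s := by
      intro m
      have hmem : T (φ m) ∈ Set.centralizer (Set.centralizer (M : Set (H →L[ℂ] H))) := by
        rw [hcc]; exact hTM (φ m)
      exact Set.mem_centralizer_iff.mp hmem s hs
    have l1 : Tendsto (fun m => ⟪T (φ m) (s x), k⟫) atTop (nhds ⟪Z (s x), k⟫) := hZMlim (s x) k
    have l2 : (fun m => ⟪T (φ m) (s x), k⟫)
        = fun m => ⟪T (φ m) x, ContinuousLinearMap.adjoint s k⟫ := by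
      funext m
      have : T (φ m) (s x) = s (T (φ m) x) := by
        have := congrArg (fun (A : H →L[ℂ] H) => A x) (hcomm m)
        simpa [ContinuousLinearMap.mul_apply] using this.symm
      rw [this, ← ContinuousLinearMap.adjoint_inner_right]
    have l3 : Tendsto (fun m => ⟪T (φ m) x, ContinuousLinearMap.adjoint s k⟫) atTop
        (nhds ⟪Z x, ContinuousLinearMap.adjoint s k⟫) := hZMlim x _
    have l4 : ⟪Z (s x), k⟫ = ⟪Z x, ContinuousLinearMap.adjoint s k⟫ := by
      refine tendsto_nhds_unique ?_ l3
      rw [← l2]; exact l1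
    calc ⟪(s * Z) x, k⟫ = ⟪s (Z x), k⟫ := by rw [ContinuousLinearMap.mul_apply]
      _ = ⟪Z x, ContinuousLinearMap.adjoint s k⟫ := by rw [← ContinuousLinearMap.adjoint_inner_right]
      _ = ⟪Z (s x), k⟫ := l4.symm
      _ = ⟪(Z * s) x, k⟫ := by rw [ContinuousLinearMap.mul_apply]
  have hZr : ‖Z‖ ≤ r := Zlin.mkContinuous_norm_le hr _
  exact ⟨Z, hZM, hZr, φ, hφ, hZMlim⟩

open Filter MeasureTheory intervalIntegral in
lemma aux_crux [TopologicalSpace.SeparableSpace H]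
    {P : ℝ → (H →L[ℂ] H) → (H →L[ℂ] H)}
    (hP : IsCpSemigroup M P) (hw : IsWeaklyContinuousSemigroup M P)
    {r : ℝ} (hr : 0 ≤ r) {Y : ℕ → (H →L[ℂ] H)}
    (hYM : ∀ n, Y n ∈ M) (hYr : ∀ n, ‖Y n‖ ≤ r)
    (hY0 : ∀ x k : H, Tendsto (fun n => ⟪Y n x, k⟫) atTop (nhds 0))
    {t : ℕ → ℝ} (ht : ∀ n, 0 ≤ t n) {tl : ℝ} (htl : 0 ≤ tl)
    (htconv : Tendsto t atTop (nhds tl)) (x k : H) :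
    Tendsto (fun n => ⟪P (t n) (Y n) x, k⟫) atTop (nhds 0) := by
  apply tendsto_of_subseq_tendsto
  intro ns hns
  set T : ℕ → (H →L[ℂ] H) := fun m => P (t (ns m)) (Y (ns m)) with hT
  have hTM : ∀ m, T m ∈ M := fun m => (hP.uncp _ (ht _)).map_mem _ (hYM _)
  have hTr : ∀ m, ‖T m‖ ≤ r := fun m =>
    le_trans (aux_contract (hP.uncp _ (ht _)) (hYM _)) (hYr _)
  obtain ⟨Z, hZM, hZr, φ, hφ, hZlim⟩ := aux_cluster (M := M) hr hTM hTr
  refine ⟨φ, ?_⟩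
  suffices hZ0 : ⟪Z x, k⟫ = 0 by
    have hfin := hZlim x k
    rw [hZ0] at hfin
    exact hfin
  -- notation for the subsequence
  set t' : ℕ → ℝ := fun m => t (ns (φ m)) with ht'
  set Y' : ℕ → (H →L[ℂ] H) := fun m => Y (ns (φ m)) with hY'
  have ht'0 : ∀ m, 0 ≤ t' m := fun m => ht _
  have ht'conv : Tendsto t' atTop (nhds tl) := htconv.comp (hns.comp hφ.tendsto_atTop)
  have hY'M : ∀ m, Y' m ∈ M := fun m => hYM _
  have hY'r : ∀ m, ‖Y' m‖ ≤ r := fun m => hYr _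
  have hY'0 : ∀ x k : H, Tendsto (fun m => ⟪Y' m x, k⟫) atTop (nhds 0) :=
    fun x k => (hY0 x k).comp (hns.comp hφ.tendsto_atTop)
  set g : ℝ → ℂ := fun s => ⟪P s Z x, k⟫ with hg
  have hgcont : ContinuousOn g (Set.Ici 0) := hw Z hZM x k
  set C : ℝ := r * ‖x‖ * ‖k‖ with hC
  have hCnn : 0 ≤ C := by positivity
  have hFb : ∀ (u : ℝ), 0 ≤ u → ∀ (W : H →L[ℂ] H), W ∈ M → ‖W‖ ≤ r →
      ‖⟪P u W x, k⟫‖ ≤ C := by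
    intro u hu W hWM hWr
    calc ‖⟪P u W x, k⟫‖ ≤ ‖P u W x‖ * ‖k‖ := norm_inner_le_norm _ _
      _ ≤ (‖P u W‖ * ‖x‖) * ‖k‖ := by gcongr; exact (P u W).le_opNorm x
      _ ≤ (r * ‖x‖) * ‖k‖ := by
          gcongr
          exact le_trans (aux_contract (hP.uncp u hu) hWM) hWr
      _ = C := by rw [hC]
  -- the continuity of u ↦ ⟪P u (Y' m) x, k⟫ on [0, ∞)
  have hFcont : ∀ m, ContinuousOn (fun u : ℝ => ⟪P u (Y' m) x, k⟫) (Set.Ici 0) :=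
    fun m => hw (Y' m) (hY'M m) x k
  have hFint : ∀ (m : ℕ) (a c : ℝ), 0 ≤ a → 0 ≤ c →
      IntervalIntegrable (fun u : ℝ => ⟪P u (Y' m) x, k⟫) MeasureTheory.volume a c := by
    intro m a c haa hcc
    apply ContinuousOn.intervalIntegrable
    refine (hFcont m).mono ?_
    intro u hu
    rcases Set.mem_uIcc.mp hu with h | h
    · exact le_trans haa h.1
    · exact le_trans hcc h.1
  -- the key claim : the integral of g over (0, b] vanishes
  have hkey : ∀ b : ℝ, 0 < b → ∫ s in Set.Ioc (0:ℝ) b, g s = 0 := by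
    intro b hb
    set G : ℕ → ℝ → ℂ := fun m s => ⟪P s (T (φ m)) x, k⟫ with hG
    have hstepA : ∀ s : ℝ, 0 ≤ s → Tendsto (fun m => G m s) atTop (nhds (g s)) := by
      intro s hs
      exact (aux_normal_seq (hP.uncp s hs) (fun m => hTM (φ m)) (fun m => hTr (φ m))
        hZM hZr hZlim) x k
    have hGcont : ∀ m, ContinuousOn (G m) (Set.Ici 0) := fun m => hw _ (hTM (φ m)) x k
    have hstepB : Tendsto (fun m => ∫ s in Set.Ioc (0:ℝ) b, G m s) atTop
        (nhds (∫ s in Set.Ioc (0:ℝ) b, g s)) := by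
      refine MeasureTheory.tendsto_integral_of_dominated_convergence (fun _ => C) ?_ ?_ ?_ ?_
      · intro m
        exact ((hGcont m).mono (fun s hs => le_of_lt hs.1)).aestronglyMeasurable
          measurableSet_Ioc
      · exact MeasureTheory.integrableOn_const measure_Ioc_lt_top.ne
      · intro m
        rw [MeasureTheory.ae_restrict_iff' measurableSet_Ioc]
        exact MeasureTheory.ae_of_all _ fun s hs => hFb s (le_of_lt hs.1) _ (hTM (φ m)) (hTr (φ m))
      · rw [MeasureTheory.ae_restrict_iff' measurableSet_Ioc]
        exact MeasureTheory.ae_of_all _ fun s hs => hstepA s (le_of_lt hs.1)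
    -- rewrite the approximating integrals using the semigroup property
    have hstepC : ∀ m, ∫ s in Set.Ioc (0:ℝ) b, G m s
        = ∫ u in (t' m)..(b + t' m), ⟪P u (Y' m) x, k⟫ := by
      intro m
      have h1 : ∀ s ∈ Set.Ioc (0:ℝ) b, G m s = ⟪P (s + t' m) (Y' m) x, k⟫ := by
        intro s hs
        have hcomp := hP.comp (t' m) s (ht'0 m) (le_of_lt hs.1) (Y' m) (hY'M m)
        show ⟪P s (P (t' m) (Y' m)) x, k⟫ = ⟪P (s + t' m) (Y' m) x, k⟫
        rw [hcomp]
      have h2 : ∫ s in Set.Ioc (0:ℝ) b, G m s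
          = ∫ s in Set.Ioc (0:ℝ) b, ⟪P (s + t' m) (Y' m) x, k⟫ :=
        MeasureTheory.setIntegral_congr_fun measurableSet_Ioc h1
      rw [h2]
      have h3 : ∫ s in Set.Ioc (0:ℝ) b, ⟪P (s + t' m) (Y' m) x, k⟫
          = ∫ s in (0:ℝ)..b, ⟪P (s + t' m) (Y' m) x, k⟫ := by
        rw [intervalIntegral.integral_of_le hb.le]
      rw [h3]
      rw [intervalIntegral.integral_comp_add_right (fun u => ⟪P u (Y' m) x, k⟫) (t' m)]
      rw [zero_add]
    -- the shifted integrals tend to 0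
    have hedge : ∀ (a c : ℝ), 0 ≤ a → 0 ≤ c → ∀ m,
        ‖∫ u in a..c, ⟪P u (Y' m) x, k⟫‖ ≤ C * |c - a| := by
      intro a c haa hcc m
      apply intervalIntegral.norm_integral_le_of_norm_le_const
      intro u hu
      have hu0 : 0 ≤ u := by
        rcases Set.mem_uIoc.mp hu with h | h
        · exact le_trans haa (le_of_lt h.1)
        · exact le_trans hcc (le_of_lt h.1)
      exact hFb u hu0 _ (hY'M m) (hY'r m)
    have habs : Tendsto (fun m => |t' m - tl|) atTop (nhds 0) := by
      have h1 : Tendsto (fun m => t' m - tl) atTop (nhds (tl - tl)) := ht'conv.sub_const tl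
      rw [sub_self] at h1
      have := h1.abs
      rwa [abs_zero] at this
    have hmul0 : Tendsto (fun m => C * |t' m - tl|) atTop (nhds 0) := by
      have := habs.const_mul C
      rwa [mul_zero] at this
    have hI1 : Tendsto (fun m => ∫ u in (t' m)..tl, ⟪P u (Y' m) x, k⟫) atTop (nhds 0) := by
      refine squeeze_zero_norm (fun m => ?_) hmul0
      have := hedge (t' m) tl (ht'0 m) htl m
      rwa [abs_sub_comm] at this
    have hI3 : Tendsto (fun m => ∫ u in (b + tl)..(b + t' m), ⟪P u (Y' m) x, k⟫) atTop
        (nhds 0) := by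
      refine squeeze_zero_norm (fun m => ?_) hmul0
      have := hedge (b + tl) (b + t' m) (by linarith) (by linarith [ht'0 m]) m
      have heq : |b + t' m - (b + tl)| = |t' m - tl| := by
        congr 1; ring
      rwa [heq] at this
    have hI2 : Tendsto (fun m => ∫ u in tl..(b + tl), ⟪P u (Y' m) x, k⟫) atTop (nhds 0) := by
      have hle : tl ≤ b + tl := by linarith
      have hconv0 : ∀ u : ℝ, 0 ≤ u →
          Tendsto (fun m => ⟪P u (Y' m) x, k⟫) atTop (nhds 0) := by
        intro u hu
        have hz : ∀ x k : H, Tendsto (fun m => ⟪Y' m x, k⟫) atTop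
            (nhds ⟪(0 : H →L[ℂ] H) x, k⟫) := by
          intro x k
          simpa using hY'0 x k
        have := (aux_normal_seq (hP.uncp u hu) hY'M hY'r (zero_mem M)
          (by simp [hr]) hz) x k
        rw [aux_map_zero (hP.uncp u hu)] at this
        simpa using this
      have heq : ∀ m, ∫ u in tl..(b + tl), ⟪P u (Y' m) x, k⟫
          = ∫ u in Set.Ioc tl (b + tl), ⟪P u (Y' m) x, k⟫ := by
        intro m
        rw [intervalIntegral.integral_of_le hle]
      simp_rw [heq]
      have hdct : Tendsto (fun m => ∫ u in Set.Ioc tl (b + tl), ⟪P u (Y' m) x, k⟫) atTop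
          (nhds (∫ _ in Set.Ioc tl (b + tl), (0 : ℂ))) := by
        refine MeasureTheory.tendsto_integral_of_dominated_convergence (fun _ => C) ?_ ?_ ?_ ?_
        · intro m
          exact ((hFcont m).mono (fun u hu => le_trans htl (le_of_lt hu.1))).aestronglyMeasurable
            measurableSet_Ioc
        · exact MeasureTheory.integrableOn_const measure_Ioc_lt_top.ne
        · intro m
          rw [MeasureTheory.ae_restrict_iff' measurableSet_Ioc]
          exact MeasureTheory.ae_of_all _ fun u hu =>
            hFb u (le_trans htl (le_of_lt hu.1)) _ (hY'M m) (hY'r m)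
        · rw [MeasureTheory.ae_restrict_iff' measurableSet_Ioc]
          exact MeasureTheory.ae_of_all _ fun u hu => hconv0 u (le_trans htl (le_of_lt hu.1))
      simpa using hdct
    -- combine the three pieces
    have hsplit : ∀ m, ∫ u in (t' m)..(b + t' m), ⟪P u (Y' m) x, k⟫
        = (∫ u in (t' m)..tl, ⟪P u (Y' m) x, k⟫)
          + ((∫ u in tl..(b + tl), ⟪P u (Y' m) x, k⟫)
            + (∫ u in (b + tl)..(b + t' m), ⟪P u (Y' m) x, k⟫)) := by
      intro m
      have i1 := hFint m (t' m) tl (ht'0 m) htl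
      have i2 := hFint m tl (b + tl) htl (by linarith)
      have i3 := hFint m (b + tl) (b + t' m) (by linarith) (by linarith [ht'0 m])
      rw [intervalIntegral.integral_add_adjacent_intervals i2 i3]
      rw [intervalIntegral.integral_add_adjacent_intervals i1 (i2.trans i3)]
    have htot : Tendsto (fun m => ∫ u in (t' m)..(b + t' m), ⟪P u (Y' m) x, k⟫) atTop
        (nhds 0) := by
      simp_rw [hsplit]
      have := hI1.add (hI2.add hI3)
      simpa using this
    have : Tendsto (fun m => ∫ s in Set.Ioc (0:ℝ) b, G m s) atTop (nhds 0) := by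
      simp_rw [hstepC]
      exact htot
    exact tendsto_nhds_unique hstepB this
  -- conclude that g 0 = 0 using continuity
  have hg0 : g 0 = ⟪Z x, k⟫ := by
    rw [hg]
    simp only
    rw [hP.id_zero Z hZM]
  rw [← hg0]
  by_contra hne
  have hpos : 0 < ‖g 0‖ := by
    rw [norm_pos_iff]
    exact hne
  set ε : ℝ := ‖g 0‖ / 2 with hε
  have hεpos : 0 < ε := by positivity
  have hcw : ContinuousWithinAt g (Set.Ici 0) 0 := hgcont 0 Set.self_mem_Ici
  rw [Metric.continuousWithinAt_iff] at hcw
  obtain ⟨δ, hδpos, hδ⟩ := hcw ε hεpos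
  set b : ℝ := min (δ / 2) 1 with hbdef
  have hbpos : 0 < b := lt_min (by positivity) one_pos
  have hclose : ∀ s ∈ Set.Ioc (0:ℝ) b, ‖g 0 - g s‖ ≤ ε := by
    intro s hs
    have hsIci : s ∈ Set.Ici (0:ℝ) := le_of_lt hs.1
    have hsdist : dist s 0 < δ := by
      rw [Real.dist_eq, sub_zero, abs_of_pos hs.1]
      calc s ≤ b := hs.2
        _ ≤ δ / 2 := min_le_left _ _
        _ < δ := by linarith
    have := hδ hsIci hsdist
    rw [dist_comm, dist_eq_norm] at this
    exact this.le
  have hgint : MeasureTheory.IntegrableOn g (Set.Ioc 0 b) := by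
    have h1 : MeasureTheory.IntegrableOn g (Set.Icc 0 b) :=
      (hgcont.mono (fun s hs => hs.1)).integrableOn_Icc
    exact h1.mono_set Set.Ioc_subset_Icc_self
  have hvol : (MeasureTheory.volume (Set.Ioc (0:ℝ) b)).toReal = b := by
    rw [Real.volume_Ioc, sub_zero, ENNReal.toReal_ofReal hbpos.le]
  have hintsub : ∫ s in Set.Ioc (0:ℝ) b, (g 0 - g s) = b • g 0 := by
    rw [MeasureTheory.integral_sub (show MeasureTheory.Integrable (fun _ => g 0) (MeasureTheory.volume.restrict (Set.Ioc (0:ℝ) b)) from MeasureTheory.integrableOn_const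
      measure_Ioc_lt_top.ne) hgint]
    rw [hkey b hbpos, sub_zero, MeasureTheory.setIntegral_const, measureReal_def, hvol]
  have hbnd : ‖∫ s in Set.Ioc (0:ℝ) b, (g 0 - g s)‖ ≤ ε * b := by
    have hmeas : MeasureTheory.AEStronglyMeasurable (fun s => g 0 - g s)
        (MeasureTheory.volume.restrict (Set.Ioc (0:ℝ) b)) :=
      MeasureTheory.aestronglyMeasurable_const.sub
        ((hgcont.mono (fun s hs => le_of_lt hs.1)).aestronglyMeasurable measurableSet_Ioc)
    have := MeasureTheory.norm_setIntegral_le_of_norm_le_const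
      (μ := MeasureTheory.volume) (s := Set.Ioc (0:ℝ) b) (f := fun s => g 0 - g s) (C := ε)
      measure_Ioc_lt_top (fun s hs => hclose s hs)
    rw [measureReal_def, hvol] at this
    exact this
  rw [hintsub] at hbnd
  have hnorm : ‖(b : ℝ) • g 0‖ = b * ‖g 0‖ := by
    rw [norm_smul, Real.norm_of_nonneg hbpos.le]
  rw [hnorm] at hbnd
  have : ‖g 0‖ ≤ ε := le_of_mul_le_mul_left (by linarith [mul_comm b ‖g 0‖] : b * ‖g 0‖ ≤ b * ε) hbpos
  rw [hε] at this
  linarith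

end Aux

open Filter in
/-- on a separable Hilbert space, a weakly continuous cp-semigroup is jointly
continuous in the weak operator topology along sequences. -/
theorem cpSemigroup_joint_wot_continuity {H : Type*} [NormedAddCommGroup H]
    [InnerProductSpace ℂ H] [CompleteSpace H] [TopologicalSpace.SeparableSpace H]
    (M : VonNeumannAlgebra H)
    (P : ℝ → (H →L[ℂ] H) → (H →L[ℂ] H))
    (hP : IsCpSemigroup M P) (hw : IsWeaklyContinuousSemigroup M P)
    (X : ℕ → (H →L[ℂ] H)) (Xl : H →L[ℂ] H)
    (hXmem : ∀ n, X n ∈ M) (hXl : Xl ∈ M)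
    (hXconv : Tendsto (fun n => (ContinuousLinearMapWOT.linearEquiv (σ := RingHom.id ℂ) (E := H) (F := H) ℂ).symm (X n)) atTop
      (nhds ((ContinuousLinearMapWOT.linearEquiv (σ := RingHom.id ℂ) (E := H) (F := H) ℂ).symm Xl)))
    (t : ℕ → ℝ) (ht : ∀ n, 0 ≤ t n) (tl : ℝ)
    (htconv : Tendsto t atTop (nhds tl)) :
    Tendsto (fun n => (ContinuousLinearMapWOT.linearEquiv (σ := RingHom.id ℂ) (E := H) (F := H) ℂ).symm (P (t n) (X n))) atTop
      (nhds ((ContinuousLinearMapWOT.linearEquiv (σ := RingHom.id ℂ) (E := H) (F := H) ℂ).symm (P tl Xl))) := by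
  have htl : 0 ≤ tl := ge_of_tendsto htconv (Eventually.of_forall ht)
  have hXi : ∀ x k : H, Tendsto (fun n => ⟪X n x, k⟫) atTop (nhds ⟪Xl x, k⟫) :=
    aux_tendsto_toWOT_iff.mp hXconv
  obtain ⟨r, hr0, hrX, hrXl⟩ := aux_bounded hXi
  set Y : ℕ → (H →L[ℂ] H) := fun n => X n - Xl with hY
  have hYM : ∀ n, Y n ∈ M := fun n => sub_mem (hXmem n) hXl
  have hYr : ∀ n, ‖Y n‖ ≤ r + r := fun n =>
    le_trans (norm_sub_le _ _) (add_le_add (hrX n) hrXl)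
  have hY0 : ∀ x k : H, Tendsto (fun n => ⟪Y n x, k⟫) atTop (nhds 0) := by
    intro x k
    have h1 := (hXi x k).sub (tendsto_const_nhds (x := ⟪Xl x, k⟫))
    rw [sub_self] at h1
    have heq : (fun n => ⟪X n x, k⟫ - ⟪Xl x, k⟫) = fun n => ⟪Y n x, k⟫ := by
      funext n
      rw [hY]
      simp only [ContinuousLinearMap.sub_apply, inner_sub_left]
    rwa [heq] at h1
  rw [aux_tendsto_toWOT_iff]
  intro x k
  have h1 : Tendsto (fun n => ⟪P (t n) (Y n) x, k⟫) atTop (nhds 0) :=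
    aux_crux hP hw (by positivity) hYM hYr hY0 ht htl htconv x k
  have h2 : Tendsto (fun n => ⟪P (t n) Xl x, k⟫) atTop (nhds ⟪P tl Xl x, k⟫) := by
    have hcw : ContinuousWithinAt (fun s : ℝ => ⟪P s Xl x, k⟫) (Set.Ici 0) tl :=
      (hw Xl hXl x k) tl (Set.mem_Ici.mpr htl)
    have htend : Tendsto t atTop (nhdsWithin tl (Set.Ici 0)) :=
      tendsto_nhdsWithin_iff.mpr ⟨htconv, Eventually.of_forall ht⟩
    have := hcw.tendsto.comp htend
    exact this
  have hsum := h1.add h2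
  rw [zero_add] at hsum
  have heq : (fun n => ⟪P (t n) (X n) x, k⟫)
      = fun n => ⟪P (t n) (Y n) x, k⟫ + ⟪P (t n) Xl x, k⟫ := by
    funext n
    have hXeq : X n = Y n + Xl := by rw [hY]; simp
    rw [hXeq, (hP.uncp _ (ht n)).map_add _ (hYM n) _ hXl,
      ContinuousLinearMap.add_apply, inner_add_left]
  rw [heq]
  exact hsum
end
end
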